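/- arXiv:2603.09563 — 5 statements merged into one kernel-verified Lean document; each statement's English description precedes it below -/
import Mathlib

section
/- Let G be the chain (path graph) on n ≥ 3 vertices v1, ..., vn with edges {v_i, v_{i+1}} for 1 ≤ i ≤ n-1, let u = v1, and let G' be obtained from G by adding the edge {v1, v3}. Then the number of triples (x, y, S), with {x, y} an unordered pair of distinct vertices and S ⊆ V \ {x, y}, such that S separates x and y in exactly one of G and G', equals 2^(n-2) - 1. -/
/-- `S` separates `u` and `v` in `G`: every `u`–`v` walk contains a vertex of `S`
(with `S` disjoint from `{u, v}`, such a vertex is internal). -/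
def Separates {n : ℕ} (G : SimpleGraph (Fin n)) (u v : Fin n) (S : Finset (Fin n)) : Prop :=
  ∀ p : G.Walk u v, ∃ w ∈ p.support, w ∈ S

/-- The separation distance between two graphs on `Fin n`: the number of triples
`(x, y, S)` with `x < y` (so each unordered pair is counted once) and
`S ⊆ V \ {x, y}` on which the separation relations of the two graphs differ. -/
noncomputable def sepDist {n : ℕ} (G₁ G₂ : SimpleGraph (Fin n)) : ℕ :=
  Set.ncard {t : Fin n × Fin n × Finset (Fin n) |
    t.1 < t.2.1 ∧ t.1 ∉ t.2.2 ∧ t.2.1 ∉ t.2.2 ∧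
    ¬ (Separates G₁ t.1 t.2.1 t.2.2 ↔ Separates G₂ t.1 t.2.1 t.2.2)}

open SimpleGraph

section ChainSep
variable {n : ℕ}


lemma adjG' {n : ℕ} (h0 : 0 < n) (h2 : 2 < n) (a b : Fin n) :
    (pathGraph n ⊔ fromEdgeSet {s((⟨0,h0⟩:Fin n),(⟨2,h2⟩:Fin n))}).Adj a b ↔
      (a.val+1 = b.val ∨ b.val+1 = a.val ∨ (a.val = 0 ∧ b.val = 2) ∨ (a.val = 2 ∧ b.val = 0)) := by
  simp only [sup_adj, pathGraph_adj, fromEdgeSet_adj, Set.mem_singleton_iff, Sym2.eq_iff,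
    Fin.ext_iff, ne_eq]
  constructor
  · rintro (h | ⟨(⟨h1,h2'⟩|⟨h1,h2'⟩), hne⟩) <;> omega
  · intro h
    rcases h with h | h | h | h
    · exact Or.inl (Or.inl h)
    · exact Or.inl (Or.inr h)
    · exact Or.inr ⟨Or.inl ⟨h.1, h.2⟩, by omega⟩
    · exact Or.inr ⟨Or.inr ⟨h.1, h.2⟩, by omega⟩

lemma ivt_path {n : ℕ} {x y : Fin n} (p : (pathGraph n).Walk x y) :
    ∀ m : ℕ, (x.val ≤ m ∧ m ≤ y.val ∨ y.val ≤ m ∧ m ≤ x.val) →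
    ∃ w ∈ p.support, w.val = m := by
  induction p with
  | @nil u => intro m hm; exact ⟨u, by simp, by omega⟩
  | @cons a b c h q ih =>
    intro m hm
    by_cases hax : m = a.val
    · exact ⟨a, by simp, hax.symm⟩
    · rw [pathGraph_adj] at h
      obtain ⟨w, hw, hwm⟩ := ih m (by omega)
      exact ⟨w, by simp [hw], hwm⟩

lemma ivt_G' {n : ℕ} (h0 : 0 < n) (h2 : 2 < n) {x y : Fin n}
    (p : (pathGraph n ⊔ fromEdgeSet {s((⟨0,h0⟩:Fin n),(⟨2,h2⟩:Fin n))}).Walk x y) :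
    ∀ m : ℕ, m ≠ 1 → (x.val ≤ m ∧ m ≤ y.val ∨ y.val ≤ m ∧ m ≤ x.val) →
    ∃ w ∈ p.support, w.val = m := by
  induction p with
  | @nil u => intro m _ hm; exact ⟨u, by simp, by omega⟩
  | @cons a b c h q ih =>
    intro m hm1 hm
    by_cases hax : m = a.val
    · exact ⟨a, by simp, hax.symm⟩
    · rw [adjG'] at h
      obtain ⟨w, hw, hwm⟩ := ih m hm1 (by omega)
      exact ⟨w, by simp [hw], hwm⟩

lemma walk_path {n : ℕ} (x y : Fin n) (hxy : x.val ≤ y.val) :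
    ∃ p : (pathGraph n).Walk x y, ∀ w ∈ p.support, x.val ≤ w.val ∧ w.val ≤ y.val := by
  obtain ⟨d, hd⟩ : ∃ d, y.val = x.val + d := ⟨y.val - x.val, by omega⟩
  clear hxy
  induction d generalizing x with
  | zero =>
    have hxy : x = y := Fin.ext (by omega)
    subst hxy; exact ⟨.nil, by simp⟩
  | succ d ih =>
    have hx1 : x.val + 1 < n := by have := y.isLt; omega
    have hadj : (pathGraph n).Adj x ⟨x.val+1, hx1⟩ := by rw [pathGraph_adj]; left; rfl
    obtain ⟨p, hp⟩ := ih ⟨x.val+1, hx1⟩ (by simp; omega)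
    refine ⟨.cons hadj p, ?_⟩
    intro w hw
    simp only [Walk.support_cons, List.mem_cons] at hw
    rcases hw with rfl | hw
    · omega
    · have := hp w hw; simp at this; omega

lemma walk_chord (h0 : 0 < n) (h2 : 2 < n) (y : Fin n) (hy : 2 ≤ y.val) :
    ∃ p : (pathGraph n ⊔ fromEdgeSet {s((⟨0,h0⟩:Fin n),(⟨2,h2⟩:Fin n))}).Walk ⟨0,h0⟩ y,
      ∀ w ∈ p.support, w.val = 0 ∨ (2 ≤ w.val ∧ w.val ≤ y.val) := by
  obtain ⟨q, hq⟩ := walk_path (⟨2,h2⟩ : Fin n) y hy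
  have hadj : (pathGraph n ⊔ fromEdgeSet {s((⟨0,h0⟩:Fin n),(⟨2,h2⟩:Fin n))}).Adj ⟨0,h0⟩ ⟨2,h2⟩ := by
    rw [adjG']; right; right; left; exact ⟨rfl, rfl⟩
  refine ⟨.cons hadj (q.mapLe le_sup_left), ?_⟩
  intro w hw
  simp only [Walk.support_cons, List.mem_cons, Walk.support_map, List.mem_map,
    Hom.ofLE_apply, exists_eq_right] at hw
  rcases hw with rfl | hw
  · left; rfl
  · right; exact hq w hw

/-- Characterization of separation in the path graph. -/
lemma sep_path_iff {x y : Fin n} {S : Finset (Fin n)} (hxy : x.val < y.val)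
    (hx : x ∉ S) (hy : y ∉ S) :
    Separates (pathGraph n) x y S ↔ ∃ k ∈ S, x.val < k.val ∧ k.val < y.val := by
  constructor
  · intro h
    obtain ⟨p, hp⟩ := walk_path x y hxy.le
    obtain ⟨w, hw, hwS⟩ := h p
    have hb := hp w hw
    have hwx : w ≠ x := fun e => hx (e ▸ hwS)
    have hwy : w ≠ y := fun e => hy (e ▸ hwS)
    rw [Ne, Fin.ext_iff] at hwx hwy
    exact ⟨w, hwS, by omega, by omega⟩
  · rintro ⟨k, hkS, hk1, hk2⟩ p
    obtain ⟨w, hw, hwval⟩ := ivt_path p k.val (Or.inl ⟨hk1.le, hk2.le⟩)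
    exact ⟨w, hw, (Fin.ext hwval : w = k) ▸ hkS⟩

/-- Characterization of separation in the path graph plus the chord 0–2. -/
lemma sep_chord_iff (h0 : 0 < n) (h2 : 2 < n) {x y : Fin n} {S : Finset (Fin n)}
    (hxy : x.val < y.val) (hx : x ∉ S) (hy : y ∉ S) :
    Separates (pathGraph n ⊔ fromEdgeSet {s((⟨0,h0⟩:Fin n),(⟨2,h2⟩:Fin n))}) x y S ↔
      ∃ k ∈ S, x.val < k.val ∧ k.val < y.val ∧ ¬(x.val = 0 ∧ k.val = 1) := by
  constructor
  · intro h
    by_cases hx0 : x.val = 0 ∧ 2 ≤ y.val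
    · obtain ⟨q, hq⟩ := walk_chord h0 h2 y hx0.2
      have hxe : x = ⟨0,h0⟩ := Fin.ext hx0.1
      obtain ⟨w, hw, hwS⟩ := h (hxe ▸ q)
      have hb : w.val = 0 ∨ (2 ≤ w.val ∧ w.val ≤ y.val) := by
        subst hxe; exact hq w hw
      have hwx : w ≠ x := fun e => hx (e ▸ hwS)
      have hwy : w ≠ y := fun e => hy (e ▸ hwS)
      rw [Ne, Fin.ext_iff] at hwx hwy
      exact ⟨w, hwS, by omega, by omega, by omega⟩
    · obtain ⟨p, hp⟩ := walk_path x y hxy.le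
      obtain ⟨w, hw, hwS⟩ := h (p.mapLe le_sup_left)
      rw [Walk.support_map] at hw
      simp only [List.mem_map, Hom.ofLE_apply, exists_eq_right] at hw
      have hb := hp w hw
      have hwx : w ≠ x := fun e => hx (e ▸ hwS)
      have hwy : w ≠ y := fun e => hy (e ▸ hwS)
      rw [Ne, Fin.ext_iff] at hwx hwy
      exact ⟨w, hwS, by omega, by omega, by omega⟩
  · rintro ⟨k, hkS, hk1, hk2, hk3⟩ p
    have hk1' : k.val ≠ 1 := by omega
    obtain ⟨w, hw, hwval⟩ := ivt_G' h0 h2 p k.val hk1' (Or.inl ⟨hk1.le, hk2.le⟩)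
    exact ⟨w, hw, (Fin.ext hwval : w = k) ▸ hkS⟩


lemma mem_D_iff (hn : 3 ≤ n) (h0 : 0 < n) (h1 : 1 < n) (h2 : 2 < n)
    (x y : Fin n) (S : Finset (Fin n)) :
    (x < y ∧ x ∉ S ∧ y ∉ S ∧
      ¬ (Separates (pathGraph n) x y S ↔
         Separates (pathGraph n ⊔ fromEdgeSet {s((⟨0,h0⟩:Fin n),(⟨2,h2⟩:Fin n))}) x y S)) ↔
    (x.val = 0 ∧ 2 ≤ y.val ∧ x ∉ S ∧ y ∉ S ∧ (⟨1,h1⟩:Fin n) ∈ S ∧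
      ∀ k ∈ S, ¬(2 ≤ k.val ∧ k.val < y.val)) := by
  constructor
  · rintro ⟨hlt, hx, hy, hne⟩
    rw [Fin.lt_def] at hlt
    rw [sep_path_iff hlt hx hy, sep_chord_iff h0 h2 hlt hx hy] at hne
    have hPQ : (∃ k ∈ S, x.val < k.val ∧ k.val < y.val) ∧
        ¬(∃ k ∈ S, x.val < k.val ∧ k.val < y.val ∧ ¬(x.val = 0 ∧ k.val = 1)) := by
      by_cases hP : ∃ k ∈ S, x.val < k.val ∧ k.val < y.val
      · refine ⟨hP, fun hQ => hne ⟨fun _ => hQ, fun _ => hP⟩⟩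
      · exfalso
        refine hne ⟨fun h => absurd h hP, fun ⟨k, hk, h1', h2', _⟩ => ⟨k, hk, h1', h2'⟩⟩
    obtain ⟨⟨k, hkS, hk1, hk2⟩, hQ⟩ := hPQ
    push_neg at hQ
    have hx0 : x.val = 0 ∧ k.val = 1 := hQ k hkS hk1 hk2
    have hkv1 : k = (⟨1,h1⟩ : Fin n) := Fin.ext hx0.2
    refine ⟨hx0.1, by omega, hx, hy, hkv1 ▸ hkS, ?_⟩
    intro j hjS hj
    have := hQ j hjS (by omega) hj.2
    omega
  · rintro ⟨hx0, hy2, hx, hy, h1S, hno⟩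
    have hlt : x.val < y.val := by omega
    refine ⟨Fin.lt_def.mpr hlt, hx, hy, ?_⟩
    rw [sep_path_iff hlt hx hy, sep_chord_iff h0 h2 hlt hx hy]
    intro hiff
    have hv : ((⟨1,h1⟩:Fin n)).val = 1 := rfl
    have hP : ∃ k ∈ S, x.val < k.val ∧ k.val < y.val := ⟨⟨1,h1⟩, h1S, by omega, by omega⟩
    obtain ⟨k, hkS, hk1, hk2, hk3⟩ := hiff.mp hP
    have : ¬(2 ≤ k.val ∧ k.val < y.val) := hno k hkS
    omega

lemma key (hn : 3 ≤ n) (h0 : 0 < n) (h2 : 2 < n) :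
    sepDist (pathGraph n) (pathGraph n ⊔ fromEdgeSet {s((⟨0,h0⟩:Fin n),(⟨2,h2⟩:Fin n))}) =
      2 ^ (n - 2) - 1 := by
  have h1 : 1 < n := by omega
  classical
  set v1 : Fin n := ⟨1, h1⟩ with hv1
  set D : Set (Fin n × Fin n × Finset (Fin n)) := {t : Fin n × Fin n × Finset (Fin n) |
    t.1 < t.2.1 ∧ t.1 ∉ t.2.2 ∧ t.2.1 ∉ t.2.2 ∧
    ¬ (Separates (pathGraph n) t.1 t.2.1 t.2.2 ↔
       Separates (pathGraph n ⊔ fromEdgeSet {s((⟨0,h0⟩:Fin n),(⟨2,h2⟩:Fin n))}) t.1 t.2.1 t.2.2)}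
      with hD
  have hmem : ∀ t : Fin n × Fin n × Finset (Fin n), t ∈ D ↔
      (t.1.val = 0 ∧ 2 ≤ t.2.1.val ∧ t.1 ∉ t.2.2 ∧ t.2.1 ∉ t.2.2 ∧ v1 ∈ t.2.2 ∧
        ∀ k ∈ t.2.2, ¬(2 ≤ k.val ∧ k.val < t.2.1.val)) := by
    intro t
    exact mem_D_iff hn h0 h1 h2 t.1 t.2.1 t.2.2
  set high : Finset (Fin n) := Finset.univ.filter (fun k => 2 ≤ k.val) with hhigh
  set T : Finset (Finset (Fin n)) := high.powerset.erase ∅ with hT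
  set ψ : (Fin n × Fin n × Finset (Fin n)) → Finset (Fin n) :=
    fun t => insert t.2.1 (t.2.2.erase v1) with hψ
  -- image
  have himg : ψ '' D = ↑T := by
    ext T'
    simp only [Set.mem_image, Finset.coe_sort_coe, Finset.mem_coe, hT, Finset.mem_erase,
      Finset.mem_powerset]
    constructor
    · rintro ⟨t, htD, rfl⟩
      obtain ⟨hx0, hy2, hx, hy, h1S, hno⟩ := (hmem t).mp htD
      constructor
      · intro he
        have : t.2.1 ∈ ψ t := Finset.mem_insert_self _ _
        rw [he] at this
        exact absurd this (Finset.notMem_empty _)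
      · intro k hk
        rw [hψ] at hk
        simp only [Finset.mem_insert, Finset.mem_erase] at hk
        simp only [hhigh, Finset.mem_filter, Finset.mem_univ, true_and]
        rcases hk with rfl | ⟨hk1, hkS⟩
        · exact hy2
        · have hk0 : k ≠ t.1 := fun e => hx (e ▸ hkS)
          rw [Ne, Fin.ext_iff] at hk0 hk1
          simp only [hv1] at hk1
          omega
    · rintro ⟨hne, hsub⟩
      have hTne : T'.Nonempty := Finset.nonempty_iff_ne_empty.mpr hne
      set y : Fin n := T'.min' hTne with hy'
      have hyT : y ∈ T' := T'.min'_mem hTne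
      have hy2 : 2 ≤ y.val := by
        have := hsub hyT
        simpa [hhigh] using this
      have h1notT : v1 ∉ T'.erase y := by
        intro h
        have := hsub (Finset.mem_of_mem_erase h)
        simp [hhigh, hv1] at this
      refine ⟨(⟨0,h0⟩, y, insert v1 (T'.erase y)), ?_, ?_⟩
      · rw [hmem]
        dsimp only
        refine ⟨rfl, hy2, ?_, ?_, Finset.mem_insert_self _ _, ?_⟩
        · simp only [Finset.mem_insert, Finset.mem_erase]
          rintro (h | ⟨-, h⟩)
          · exact absurd (congrArg Fin.val h) (by simp [hv1])
          · have := hsub h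
            simp [hhigh] at this
        · simp only [Finset.mem_insert, Finset.mem_erase]
          rintro (h | ⟨h, -⟩)
          · have := congrArg Fin.val h
            simp [hv1] at this
            omega
          · exact h rfl
        · intro k hk
          simp only [Finset.mem_insert, Finset.mem_erase] at hk
          rcases hk with rfl | ⟨hk1, hkT⟩
          · simp [hv1]
          · have hle := T'.min'_le k hkT
            rw [Fin.le_def] at hle
            omega
      · show ψ _ = T'
        simp only [hψ]
        rw [Finset.erase_insert h1notT, Finset.insert_erase hyT]
  -- injectivity
  have hinj : Set.InjOn ψ D := by
    rintro t ht t' ht' hψeq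
    obtain ⟨hx0, hy2, hx, hy, h1S, hno⟩ := (hmem t).mp ht
    obtain ⟨hx0', hy2', hx', hy', h1S', hno'⟩ := (hmem t').mp ht'
    have hfst : t.1 = t'.1 := Fin.ext (by omega)
    simp only [hψ] at hψeq
    have hyy : t.2.1 = t'.2.1 := by
      have hm : t.2.1 ∈ insert t'.2.1 (t'.2.2.erase v1) := by
        rw [← hψeq]; exact Finset.mem_insert_self _ _
      have hm' : t'.2.1 ∈ insert t.2.1 (t.2.2.erase v1) := by
        rw [hψeq]; exact Finset.mem_insert_self _ _
      simp only [Finset.mem_insert, Finset.mem_erase] at hm hm'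
      rcases hm with h | ⟨hne1, hmem1⟩
      · exact h
      · rcases hm' with h | ⟨hne1', hmem1'⟩
        · exact h.symm
        · have ha := hno' t.2.1 hmem1
          have hb := hno t'.2.1 hmem1'
          exact Fin.ext (by omega)
    have hyS : t.2.1 ∉ t.2.2.erase v1 := fun h => hy (Finset.mem_of_mem_erase h)
    have hyS' : t'.2.1 ∉ t'.2.2.erase v1 := fun h => hy' (Finset.mem_of_mem_erase h)
    have hsnd : t.2.2 = t'.2.2 := by
      rw [hyy] at hψeq
      have hyS2 : t'.2.1 ∉ t.2.2.erase v1 := by rw [← hyy]; exact hyS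
      have this : t.2.2.erase v1 = t'.2.2.erase v1 := by
        rw [← Finset.erase_insert hyS2, ← Finset.erase_insert hyS', hψeq]
      calc t.2.2 = insert v1 (t.2.2.erase v1) := (Finset.insert_erase h1S).symm
        _ = insert v1 (t'.2.2.erase v1) := by rw [this]
        _ = t'.2.2 := Finset.insert_erase h1S'
    exact Prod.ext hfst (Prod.ext hyy hsnd)
  -- cardinalities
  have e0 : ((⟨0,h0⟩:Fin n)).val = 0 := rfl
  have e1 : v1.val = 1 := rfl
  have hhighcard : high.card = n - 2 := by
    have hset : high = Finset.univ \ {⟨0,h0⟩, v1} := by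
      ext k
      simp only [hhigh, Finset.mem_filter, Finset.mem_univ, true_and, Finset.mem_sdiff,
        Finset.mem_insert, Finset.mem_singleton, Fin.ext_iff, not_or]
      omega
    have hpair : ({⟨0,h0⟩, v1} : Finset (Fin n)).card = 2 := by
      rw [Finset.card_insert_of_notMem (by simp [Fin.ext_iff]), Finset.card_singleton]
    rw [hset, Finset.card_sdiff_of_subset (by intro k hk; exact Finset.mem_univ k), hpair,
      Finset.card_univ, Fintype.card_fin]
  have hTcard : T.card = 2 ^ (n - 2) - 1 := by
    rw [hT, Finset.card_erase_of_mem (Finset.empty_mem_powerset _), Finset.card_powerset,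
      hhighcard]
  calc sepDist (pathGraph n) (pathGraph n ⊔ fromEdgeSet {s((⟨0,h0⟩:Fin n),(⟨2,h2⟩:Fin n))})
      = D.ncard := rfl
    _ = (ψ '' D).ncard := (Set.ncard_image_of_injOn hinj).symm
    _ = (↑T : Set (Finset (Fin n))).ncard := by rw [himg]
    _ = T.card := Set.ncard_coe_finset T
    _ = 2 ^ (n - 2) - 1 := hTcard


end ChainSep

theorem chain_add_edge_sepDist {n : ℕ} (hn : 3 ≤ n)
    (G G' : SimpleGraph (Fin n)) (hG : G = SimpleGraph.pathGraph n)
    (hG' : G' = G ⊔ SimpleGraph.fromEdgeSet {s((⟨0, by omega⟩ : Fin n), ⟨2, by omega⟩)}) :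
    sepDist G G' = 2 ^ (n - 2) - 1 := by
  have h0 : 0 < n := by omega
  have h2 : 2 < n := by omega
  subst hG
  subst hG'
  exact key hn h0 h2
end

section
/- Let G be the chain (path graph) on n ≥ 3 vertices. For every undirected graph G' on the same vertex set with G' ≠ G, the number of triples (x, y, S) on which the separation relations of G and G' differ is at least 2^(n-2) - 1; moreover this bound is attained by some G' obtained from G by adding a single edge. -/
open SimpleGraph Finset

variable {n : ℕ}

/-- A walk from inside `B` to outside `B` must cross the boundary. -/
lemma walk_cross (G : SimpleGraph (Fin n)) {x y : Fin n} (p : G.Walk x y)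
    (B : Fin n → Prop) (hx : B x) (hy : ¬ B y) :
    ∃ u v, G.Adj u v ∧ B u ∧ ¬ B v ∧ u ∈ p.support ∧ v ∈ p.support := by
  induction p with
  | nil => exact absurd hx hy
  | @cons x w y h p ih =>
    by_cases hw : B w
    · obtain ⟨u, v, h1, h2, h3, h4, h5⟩ := ih hw hy
      exact ⟨u, v, h1, h2, h3, by simp [SimpleGraph.Walk.support_cons, h4],
        by simp [SimpleGraph.Walk.support_cons, h5]⟩
    · exact ⟨x, w, h, hx, hw, by simp [SimpleGraph.Walk.support_cons],
        by simp [SimpleGraph.Walk.support_cons, SimpleGraph.Walk.start_mem_support]⟩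

/-- Build a monotone walk along consecutive edges. -/
lemma walk_exists (G : SimpleGraph (Fin n)) (x : Fin n) :
    ∀ (k : ℕ) (y : Fin n), y.val = x.val + k →
    (∀ (j : ℕ) (h1 : j < n) (h2 : j + 1 < n), x.val ≤ j → j + 1 ≤ y.val →
      G.Adj ⟨j, h1⟩ ⟨j + 1, h2⟩) →
    ∃ p : G.Walk x y, ∀ w ∈ p.support, x.val ≤ w.val ∧ w.val ≤ y.val := by
  intro k
  induction k with
  | zero =>
    intro y hk _
    have hxy : x = y := Fin.ext (by omega)
    subst hxy
    exact ⟨SimpleGraph.Walk.nil, by simp⟩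
  | succ k ih =>
    intro y hk hadj
    have hy : y.val < n := y.isLt
    set y' : Fin n := ⟨x.val + k, by omega⟩ with hy'
    obtain ⟨p, hp⟩ := ih y' rfl (fun j h1 h2 hj1 hj2 => hadj j h1 h2 hj1 (by simp only [hy'] at hj2; omega))
    have hadj' : G.Adj y' y := by
      have := hadj (x.val + k) (by omega) (by omega) (by omega) (by omega)
      convert this using 1
      exact Fin.ext (by simp [hy']; omega)
    refine ⟨p.concat hadj', ?_⟩
    intro w hw
    rw [SimpleGraph.Walk.support_concat] at hw
    rw [List.mem_append] at hw
    rcases hw with h | h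
    · have := hp w h
      have hyv : y'.val = x.val + k := rfl
      omega
    · simp only [List.mem_singleton] at h
      subst h
      omega

lemma key_ineq (u v : ℕ) (hu : 1 ≤ u) (hv : 1 ≤ v) :
    2 * (u * v) - 1 ≤ (2 * u - 1) * (2 * v - 1) := by
  obtain ⟨u', rfl⟩ : ∃ u', u = u' + 1 := ⟨u - 1, by omega⟩
  obtain ⟨v', rfl⟩ : ∃ v', v = v' + 1 := ⟨v - 1, by omega⟩
  have h1 : 2 * (u' + 1) - 1 = 2 * u' + 1 := by omega
  have h2 : 2 * (v' + 1) - 1 = 2 * v' + 1 := by omega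
  rw [h1, h2]
  have h3 : 2 * ((u' + 1) * (v' + 1)) ≤ (2 * u' + 1) * (2 * v' + 1) + 1 := by nlinarith
  omega

lemma two_pow_mul_lb (s t : ℕ) (hs : 1 ≤ s) (ht : 1 ≤ t) :
    2 ^ (s + t - 1) - 1 ≤ (2 ^ s - 1) * (2 ^ t - 1) := by
  obtain ⟨s', rfl⟩ : ∃ s', s = s' + 1 := ⟨s - 1, by omega⟩
  obtain ⟨t', rfl⟩ : ∃ t', t = t' + 1 := ⟨t - 1, by omega⟩
  have hu : 1 ≤ 2 ^ s' := Nat.one_le_two_pow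
  have hv : 1 ≤ 2 ^ t' := Nat.one_le_two_pow
  have e0 : s' + 1 + (t' + 1) - 1 = s' + t' + 1 := by omega
  have e1 : 2 ^ (s' + t' + 1) = 2 * (2 ^ s' * 2 ^ t') := by
    rw [pow_succ, pow_add]; ring
  have e2 : 2 ^ (s' + 1) = 2 * 2 ^ s' := by rw [pow_succ]; ring
  have e3 : 2 ^ (t' + 1) = 2 * 2 ^ t' := by rw [pow_succ]; ring
  rw [e0, e1, e2, e3]
  exact key_ineq _ _ hu hv

lemma sep_pathGraph_of {x y z : Fin n} {S : Finset (Fin n)} (hz : z ∈ S)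
    (h1 : x.val < z.val) (h2 : z.val ≤ y.val) : Separates (SimpleGraph.pathGraph n) x y S := by
  intro p
  obtain ⟨u, v, hadj, hu, hv, _, hvs⟩ :=
    walk_cross _ p (fun w => w.val < z.val) h1 (by simp; omega)
  rw [SimpleGraph.pathGraph_adj] at hadj
  simp only [not_lt] at hv
  rcases hadj with h | h
  · have : v = z := Fin.ext (by omega)
    exact ⟨v, hvs, this ▸ hz⟩
  · omega

lemma not_sep_pathGraph {x y : Fin n} {S : Finset (Fin n)} (hxy : x.val ≤ y.val)
    (hS : ∀ z ∈ S, z.val < x.val ∨ y.val < z.val) :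
    ¬ Separates (SimpleGraph.pathGraph n) x y S := by
  obtain ⟨p, hp⟩ := walk_exists (SimpleGraph.pathGraph n) x (y.val - x.val) y (by omega)
    (fun j h1 h2 _ _ => by rw [SimpleGraph.pathGraph_adj]; left; rfl)
  intro hsep
  obtain ⟨w, hw, hwS⟩ := hsep p
  have := hp w hw
  have := hS w hwS
  omega

lemma sep_mono {G H : SimpleGraph (Fin n)} (hle : G ≤ H) {x y : Fin n} {S : Finset (Fin n)}
    (h : Separates H x y S) : Separates G x y S := by
  intro p
  obtain ⟨w, hw, hwS⟩ := h (p.mapLe hle)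
  refine ⟨w, ?_, hwS⟩
  simp only [SimpleGraph.Walk.support_map, List.mem_map] at hw
  obtain ⟨w', hw', he⟩ := hw
  have : w' = w := he
  rwa [← this]

lemma ncard_lb (F : Finset (Fin n × Fin n × Finset (Fin n)))
    (D : Set (Fin n × Fin n × Finset (Fin n))) (h : ↑F ⊆ D) : F.card ≤ D.ncard := by
  have h2 := Set.ncard_le_ncard h (Set.toFinite D)
  rwa [Set.ncard_coe_finset] at h2

lemma card_filter_val (p : ℕ → Prop) [DecidablePred p] :
    (Finset.univ.filter fun z : Fin n => p z.val).card = ((Finset.range n).filter p).card := by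
  rw [← Finset.card_image_of_injective _ Fin.val_injective]
  congr 1
  ext i
  simp only [Finset.mem_image, Finset.mem_filter, Finset.mem_univ, true_and, Finset.mem_range]
  constructor
  · rintro ⟨z, hz, rfl⟩; exact ⟨z.isLt, hz⟩
  · rintro ⟨h1, h2⟩; exact ⟨⟨i, h1⟩, h2, rfl⟩

lemma card_le_val (a : ℕ) (ha : a < n) :
    (Finset.univ.filter fun z : Fin n => z.val ≤ a).card = a + 1 := by
  rw [card_filter_val (fun j => j ≤ a)]
  have : (Finset.range n).filter (fun j => j ≤ a) = Finset.range (a + 1) := by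
    ext i; simp [Finset.mem_range, Finset.mem_filter]; omega
  rw [this, Finset.card_range]

lemma card_between_val (a b : ℕ) (hb : b ≤ n) :
    (Finset.univ.filter fun z : Fin n => a < z.val ∧ z.val < b).card = b - (a + 1) := by
  rw [card_filter_val (fun j => a < j ∧ j < b)]
  have : (Finset.range n).filter (fun j => a < j ∧ j < b) = Finset.Ico (a + 1) b := by
    ext i; simp [Finset.mem_range, Finset.mem_filter, Finset.mem_Ico]; omega
  rw [this, Nat.card_Ico]

lemma card_ge_val (b : ℕ) :
    (Finset.univ.filter fun z : Fin n => b ≤ z.val).card = n - b := by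
  rw [card_filter_val (fun j => b ≤ j)]
  have : (Finset.range n).filter (fun j => b ≤ j) = Finset.Ico b n := by
    ext i; simp [Finset.mem_range, Finset.mem_filter, Finset.mem_Ico]; omega
  rw [this, Nat.card_Ico]

lemma card_ne_powerset (I : Finset (Fin n)) :
    (I.powerset.erase ∅).card = 2 ^ I.card - 1 := by
  rw [Finset.card_erase_of_mem (Finset.empty_mem_powerset I), Finset.card_powerset]

def Dset {n : ℕ} (G₁ G₂ : SimpleGraph (Fin n)) : Set (Fin n × Fin n × Finset (Fin n)) :=
  {t : Fin n × Fin n × Finset (Fin n) |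
    t.1 < t.2.1 ∧ t.1 ∉ t.2.2 ∧ t.2.1 ∉ t.2.2 ∧
    ¬ (Separates G₁ t.1 t.2.1 t.2.2 ↔ Separates G₂ t.1 t.2.1 t.2.2)}

lemma sepDist_eq_Dset {n : ℕ} (G₁ G₂ : SimpleGraph (Fin n)) :
    sepDist G₁ G₂ = (Dset G₁ G₂).ncard := rfl

lemma mem_Dset {n : ℕ} {G₁ G₂ : SimpleGraph (Fin n)} {x y : Fin n} {S : Finset (Fin n)} :
    (x, y, S) ∈ Dset G₁ G₂ ↔
      x < y ∧ x ∉ S ∧ y ∉ S ∧ ¬ (Separates G₁ x y S ↔ Separates G₂ x y S) := Iff.rfl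

lemma case_cut (G' : SimpleGraph (Fin n)) (j : ℕ) (hj : j + 1 < n)
    (hcut : ∀ u v : Fin n, u.val ≤ j → j < v.val → ¬ G'.Adj u v) :
    2 ^ (n - 2) - 1 ≤ sepDist (SimpleGraph.pathGraph n) G' := by
  set x : Fin n := ⟨j, by omega⟩ with hx
  set y : Fin n := ⟨j + 1, hj⟩ with hy
  set F : Finset (Fin n × Fin n × Finset (Fin n)) :=
    ((Finset.univ.erase x).erase y).powerset.image (fun S => (x, y, S)) with hF
  have hsub : ↑F ⊆ Dset (SimpleGraph.pathGraph n) G' := by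
    intro t ht
    simp only [hF, Finset.coe_image, Set.mem_image, Finset.mem_coe,
      Finset.mem_powerset] at ht
    obtain ⟨S, hS, rfl⟩ := ht
    have hxS : x ∉ S := fun h => by
      have := hS h; simp [Finset.mem_erase] at this
    have hyS : y ∉ S := fun h => by
      have := hS h; simp [Finset.mem_erase] at this
    refine mem_Dset.mpr ⟨by simp [Fin.lt_def, hx, hy], hxS, hyS, ?_⟩
    have hG : Separates G' x y S := by
      intro p
      obtain ⟨u, v, hadj, hu, hv, _, _⟩ :=
        walk_cross G' p (fun w => w.val ≤ j) (by simp [hx]) (by simp [hy])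
      exact absurd hadj (hcut u v hu (by omega))
    have hP : ¬ Separates (SimpleGraph.pathGraph n) x y S := by
      refine not_sep_pathGraph (by simp [hx, hy]) ?_
      intro z hz
      have h1 : z ≠ x := fun h => hxS (h ▸ hz)
      have h2 : z ≠ y := fun h => hyS (h ▸ hz)
      rw [Fin.ne_iff_vne] at h1 h2
      simp only [hx, hy] at h1 h2 ⊢
      omega
    simp [hP, hG]
  have hcard : F.card = 2 ^ (n - 2) := by
    rw [hF, Finset.card_image_of_injective _ (fun S T h => by simpa using h),
      Finset.card_powerset, Finset.card_erase_of_mem, Finset.card_erase_of_mem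
      (Finset.mem_univ x), Finset.card_univ, Fintype.card_fin]
    · rfl
    · refine Finset.mem_erase.mpr ⟨fun h => ?_, Finset.mem_univ y⟩
      rw [Fin.ext_iff] at h
      simp [hx, hy] at h
  calc 2 ^ (n - 2) - 1 ≤ F.card := by rw [hcard]; exact Nat.sub_le _ _
    _ ≤ _ := by rw [sepDist_eq_Dset]; exact ncard_lb F _ hsub

/-- The family of differing triples coming from one extra edge `{a,b}`. -/
noncomputable def edgeFam {n : ℕ} (a b : Fin n) (c : Fin n) :
    Finset (Fin n × Fin n × Finset (Fin n)) :=
  ((((Finset.univ.erase a).erase b).erase c).powerset).image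
    (fun T => (a, b, insert c T))

lemma edgeFam_card (a b c : Fin n) (hab : a ≠ b) (hac : c ≠ a) (hbc : c ≠ b) :
    (edgeFam a b c).card = 2 ^ (n - 3) := by
  unfold edgeFam
  rw [Finset.card_image_of_injOn, Finset.card_powerset]
  · congr 1
    rw [Finset.card_erase_of_mem, Finset.card_erase_of_mem, Finset.card_erase_of_mem
      (Finset.mem_univ a), Finset.card_univ, Fintype.card_fin]
    · omega
    · exact Finset.mem_erase.mpr ⟨hab.symm, Finset.mem_univ b⟩
    · exact Finset.mem_erase.mpr ⟨hbc, Finset.mem_erase.mpr ⟨hac, Finset.mem_univ c⟩⟩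
  · intro T hT T' hT' h
    simp only [Finset.mem_coe, Finset.mem_powerset] at hT hT'
    have hcT : c ∉ T := fun h' => by have := hT h'; simp [Finset.mem_erase] at this
    have hcT' : c ∉ T' := fun h' => by have := hT' h'; simp [Finset.mem_erase] at this
    have : insert c T = insert c T' := by
      have := congrArg (fun t : Fin n × Fin n × Finset (Fin n) => t.2.2) h
      simpa using this
    rw [← Finset.erase_insert hcT, ← Finset.erase_insert hcT', this]

lemma edgeFam_sub (G' : SimpleGraph (Fin n)) (a b : Fin n)
    (hadj : G'.Adj a b) (ho : a.val + 2 ≤ b.val) :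
    ↑(edgeFam a b ⟨a.val + 1, by omega⟩) ⊆ Dset (SimpleGraph.pathGraph n) G' := by
  set c : Fin n := ⟨a.val + 1, by omega⟩ with hc
  intro t ht
  simp only [edgeFam, Finset.coe_image, Set.mem_image, Finset.mem_coe,
    Finset.mem_powerset] at ht
  obtain ⟨T, hT, rfl⟩ := ht
  have haT : a ∉ T := fun h' => by have := hT h'; simp [Finset.mem_erase] at this
  have hbT : b ∉ T := fun h' => by have := hT h'; simp [Finset.mem_erase] at this
  have haS : a ∉ insert c T := by
    simp only [Finset.mem_insert]
    rintro (h | h)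
    · rw [Fin.ext_iff] at h; simp [hc] at h
    · exact haT h
  have hbS : b ∉ insert c T := by
    simp only [Finset.mem_insert]
    rintro (h | h)
    · rw [Fin.ext_iff] at h; simp [hc] at h; omega
    · exact hbT h
  refine mem_Dset.mpr ⟨by rw [Fin.lt_def]; omega, haS, hbS, ?_⟩
  have hP : Separates (SimpleGraph.pathGraph n) a b (insert c T) :=
    sep_pathGraph_of (Finset.mem_insert_self c T) (by simp [hc]) (by simp [hc]; omega)
  have hG : ¬ Separates G' a b (insert c T) := by
    intro hsep
    obtain ⟨w, hw, hwS⟩ := hsep (SimpleGraph.Walk.cons hadj SimpleGraph.Walk.nil)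
    simp only [SimpleGraph.Walk.support_cons, SimpleGraph.Walk.support_nil,
      List.mem_cons, List.mem_singleton] at hw
    rcases hw with rfl | hw
    · exact haS hwS
    · rcases hw with rfl | hw
      · exact hbS hwS
      · simp at hw
  simp [hP, hG]

lemma case_two_edges (hn : 3 ≤ n) (G' : SimpleGraph (Fin n)) (a b a' b' : Fin n)
    (h1 : G'.Adj a b) (h2 : G'.Adj a' b') (o1 : a.val + 2 ≤ b.val) (o2 : a'.val + 2 ≤ b'.val)
    (hne : a ≠ a' ∨ b ≠ b') : 2 ^ (n - 2) - 1 ≤ sepDist (SimpleGraph.pathGraph n) G' := by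
  set F1 := edgeFam a b (⟨a.val + 1, by omega⟩ : Fin n) with hF1
  set F2 := edgeFam a' b' (⟨a'.val + 1, by omega⟩ : Fin n) with hF2
  have hd : Disjoint F1 F2 := by
    rw [Finset.disjoint_left]
    intro t ht1 ht2
    simp only [hF1, hF2, edgeFam, Finset.mem_image] at ht1 ht2
    obtain ⟨T, _, rfl⟩ := ht1
    obtain ⟨T', _, heq⟩ := ht2
    have e1 : a' = a := congrArg (fun t : Fin n × Fin n × Finset (Fin n) => t.1) heq
    have e2 : b' = b := congrArg (fun t : Fin n × Fin n × Finset (Fin n) => t.2.1) heq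
    rcases hne with h | h
    · exact h e1.symm
    · exact h e2.symm
  have hsub : ↑(F1 ∪ F2) ⊆ Dset (SimpleGraph.pathGraph n) G' := by
    rw [Finset.coe_union]
    exact Set.union_subset (edgeFam_sub G' a b h1 o1) (edgeFam_sub G' a' b' h2 o2)
  have hcard : (F1 ∪ F2).card = 2 ^ (n - 2) := by
    rw [Finset.card_union_of_disjoint hd, hF1, hF2,
      edgeFam_card a b _ (by rw [Fin.ne_iff_vne]; omega)
        (by rw [Fin.ne_iff_vne]; simp only [Fin.val_mk]; omega)
        (by rw [Fin.ne_iff_vne]; simp only [Fin.val_mk]; omega),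
      edgeFam_card a' b' _ (by rw [Fin.ne_iff_vne]; omega)
        (by rw [Fin.ne_iff_vne]; simp only [Fin.val_mk]; omega)
        (by rw [Fin.ne_iff_vne]; simp only [Fin.val_mk]; omega)]
    have : n - 2 = (n - 3) + 1 := by omega
    rw [this, pow_succ]
    ring
  calc 2 ^ (n - 2) - 1 ≤ (F1 ∪ F2).card := by rw [hcard]; exact Nat.sub_le _ _
    _ ≤ _ := by rw [sepDist_eq_Dset]; exact ncard_lb _ _ hsub

lemma case_one_edge (hn : 3 ≤ n) (G' : SimpleGraph (Fin n)) (a b : Fin n)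
    (hab : G'.Adj a b) (ho : a.val + 2 ≤ b.val)
    (hD : ∀ (j : ℕ) (h1 : j < n) (h2 : j + 1 < n), (j + 1 ≤ a.val ∨ b.val ≤ j) →
      G'.Adj ⟨j, h1⟩ ⟨j + 1, h2⟩) :
    2 ^ (n - 2) - 1 ≤ sepDist (SimpleGraph.pathGraph n) G' := by
  classical
  set I1 := Finset.univ.filter (fun z : Fin n => z.val ≤ a.val) with hI1
  set I2 := Finset.univ.filter (fun z : Fin n => a.val < z.val ∧ z.val < b.val) with hI2
  set I3 := Finset.univ.filter (fun z : Fin n => b.val ≤ z.val) with hI3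
  set P1 := I1.powerset.erase ∅ with hP1
  set P2 := I2.powerset.erase ∅ with hP2
  set P3 := I3.powerset.erase ∅ with hP3
  set src := P1 ×ˢ P2 ×ˢ P3 with hsrc
  set f : Finset (Fin n) × Finset (Fin n) × Finset (Fin n) → Fin n × Fin n × Finset (Fin n) :=
    fun W => (WithBot.unbotD a W.1.max, WithTop.untopD a W.2.2.min,
      (W.1.erase (WithBot.unbotD a W.1.max)) ∪ W.2.1 ∪ (W.2.2.erase (WithTop.untopD a W.2.2.min))) with hf
  have hmax : ∀ (W : Finset (Fin n)) (h : W.Nonempty), WithBot.unbotD a W.max = W.max' h := by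
    intro W h
    rw [← Finset.coe_max' h]
    rfl
  have hmin : ∀ (W : Finset (Fin n)) (h : W.Nonempty), WithTop.untopD a W.min = W.min' h := by
    intro W h
    rw [← Finset.coe_min' h]
    rfl
  -- membership facts
  have hmemP : ∀ (I W : Finset (Fin n)), W ∈ I.powerset.erase ∅ → W ⊆ I ∧ W.Nonempty := by
    intro I W hW
    rw [Finset.mem_erase, Finset.mem_powerset] at hW
    exact ⟨hW.2, Finset.nonempty_iff_ne_empty.mpr hW.1⟩
  have hI1mem : ∀ z ∈ I1, z.val ≤ a.val := fun z hz => by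
    rw [hI1, Finset.mem_filter] at hz; exact hz.2
  have hI2mem : ∀ z ∈ I2, a.val < z.val ∧ z.val < b.val := fun z hz => by
    rw [hI2, Finset.mem_filter] at hz; exact hz.2
  have hI3mem : ∀ z ∈ I3, b.val ≤ z.val := fun z hz => by
    rw [hI3, Finset.mem_filter] at hz; exact hz.2
  -- main structural fact about f on src
  have hstruct : ∀ W ∈ src,
      ∃ (hne1 : W.1.Nonempty) (hne3 : W.2.2.Nonempty),
        f W = (W.1.max' hne1, W.2.2.min' hne3,
          (W.1.erase (W.1.max' hne1)) ∪ W.2.1 ∪ (W.2.2.erase (W.2.2.min' hne3))) ∧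
        W.1 ⊆ I1 ∧ W.2.1 ⊆ I2 ∧ W.2.2 ⊆ I3 ∧ W.2.1.Nonempty := by
    intro W hW
    rw [hsrc, Finset.mem_product] at hW
    obtain ⟨hW1, hW23⟩ := hW
    rw [Finset.mem_product] at hW23
    obtain ⟨hW2, hW3⟩ := hW23
    obtain ⟨hs1, hne1⟩ := hmemP _ _ hW1
    obtain ⟨hs2, hne2⟩ := hmemP _ _ hW2
    obtain ⟨hs3, hne3⟩ := hmemP _ _ hW3
    exact ⟨hne1, hne3, by rw [hf]; simp only [hmax _ hne1, hmin _ hne3], hs1, hs2, hs3, hne2⟩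
  have hmapsto : ∀ W ∈ src, f W ∈ Dset (SimpleGraph.pathGraph n) G' := by
    intro W hW
    obtain ⟨hne1, hne3, hfW, hs1, hs2, hs3, hne2⟩ := hstruct W hW
    set x := W.1.max' hne1 with hx
    set y := W.2.2.min' hne3 with hy
    set S := (W.1.erase x) ∪ W.2.1 ∪ (W.2.2.erase y) with hS
    rw [hfW]
    have hxa : x.val ≤ a.val := hI1mem x (hs1 (W.1.max'_mem hne1))
    have hyb : b.val ≤ y.val := hI3mem y (hs3 (W.2.2.min'_mem hne3))
    have hW1le : ∀ z ∈ W.1, z.val ≤ x.val := fun z hz => Finset.le_max' _ z hz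
    have hW3ge : ∀ z ∈ W.2.2, y.val ≤ z.val := fun z hz => Finset.min'_le _ z hz
    have hxS : x ∉ S := by
      rw [hS]
      simp only [Finset.mem_union, Finset.mem_erase, not_or]
      refine ⟨⟨fun h => h.1 rfl, fun h => ?_⟩, fun h => ?_⟩
      · have := hI2mem x (hs2 h); omega
      · have := hI3mem x (hs3 h.2); omega
    have hyS : y ∉ S := by
      rw [hS]
      simp only [Finset.mem_union, Finset.mem_erase, not_or]
      refine ⟨⟨fun h => ?_, fun h => ?_⟩, fun h => h.1 rfl⟩
      · have := hI1mem y (hs1 h.2); omega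
      · have := hI2mem y (hs2 h); omega
    refine mem_Dset.mpr ⟨by rw [Fin.lt_def]; omega, hxS, hyS, ?_⟩
    obtain ⟨c, hc⟩ := hne2
    have hcab : a.val < c.val ∧ c.val < b.val := hI2mem c (hs2 hc)
    have hcS : c ∈ S := by
      rw [hS]; simp only [Finset.mem_union]; exact Or.inl (Or.inr hc)
    have hP : Separates (SimpleGraph.pathGraph n) x y S :=
      sep_pathGraph_of hcS (by omega) (by omega)
    have hG : ¬ Separates G' x y S := by
      obtain ⟨p1, hp1⟩ := walk_exists G' x (a.val - x.val) a (by omega)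
        (fun j h1 h2 hj1 hj2 => hD j h1 h2 (Or.inl (by omega)))
      obtain ⟨p2, hp2⟩ := walk_exists G' b (y.val - b.val) y (by omega)
        (fun j h1 h2 hj1 hj2 => hD j h1 h2 (Or.inr (by omega)))
      intro hsep
      obtain ⟨w, hw, hwS⟩ := hsep (p1.append (SimpleGraph.Walk.cons hab p2))
      rw [SimpleGraph.Walk.support_append] at hw
      have hwb : (x.val ≤ w.val ∧ w.val ≤ a.val) ∨ (b.val ≤ w.val ∧ w.val ≤ y.val) := by
        rcases List.mem_append.mp hw with h | h
        · exact Or.inl (hp1 w h)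
        · rw [SimpleGraph.Walk.support_cons] at h
          exact Or.inr (hp2 w h)
      rw [hS] at hwS
      simp only [Finset.mem_union, Finset.mem_erase] at hwS
      rcases hwS with (⟨hwx, hw1⟩ | hw2) | ⟨hwy, hw3⟩
      · have h1 := hW1le w hw1
        have h2 : w.val ≠ x.val := fun h => hwx (Fin.ext h)
        omega
      · have := hI2mem w (hs2 hw2); omega
      · have h1 := hW3ge w hw3
        have h2 : w.val ≠ y.val := fun h => hwy (Fin.ext h)
        omega
    simp [hP, hG]
  have hinj : Set.InjOn f ↑src := by
    intro W hW V hV heq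
    obtain ⟨hne1, hne3, hfW, hs1, hs2, hs3, _⟩ := hstruct W (Finset.mem_coe.mp hW)
    obtain ⟨hne1', hne3', hfV, hs1', hs2', hs3', _⟩ := hstruct V (Finset.mem_coe.mp hV)
    rw [hfW, hfV] at heq
    have ex : W.1.max' hne1 = V.1.max' hne1' :=
      congrArg (fun t : Fin n × Fin n × Finset (Fin n) => t.1) heq
    have ey : W.2.2.min' hne3 = V.2.2.min' hne3' :=
      congrArg (fun t : Fin n × Fin n × Finset (Fin n) => t.2.1) heq
    have eS : (W.1.erase (W.1.max' hne1)) ∪ W.2.1 ∪ (W.2.2.erase (W.2.2.min' hne3)) =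
        (V.1.erase (V.1.max' hne1')) ∪ V.2.1 ∪ (V.2.2.erase (V.2.2.min' hne3')) :=
      congrArg (fun t : Fin n × Fin n × Finset (Fin n) => t.2.2) heq
    -- recovery of each component
    have recover : ∀ (W1 W2 W3 : Finset (Fin n)) (h1 : W1.Nonempty) (h3 : W3.Nonempty),
        W1 ⊆ I1 → W2 ⊆ I2 → W3 ⊆ I3 →
        (W1 = insert (W1.max' h1)
            (((W1.erase (W1.max' h1)) ∪ W2 ∪ (W3.erase (W3.min' h3))).filter
              (fun z => z.val ≤ a.val)) ∧
         W2 = ((W1.erase (W1.max' h1)) ∪ W2 ∪ (W3.erase (W3.min' h3))).filter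
              (fun z => a.val < z.val ∧ z.val < b.val) ∧
         W3 = insert (W3.min' h3)
            (((W1.erase (W1.max' h1)) ∪ W2 ∪ (W3.erase (W3.min' h3))).filter
              (fun z => b.val ≤ z.val))) := by
      intro W1 W2 W3 h1 h3 hsub1 hsub2 hsub3
      have m1 : ∀ z ∈ W1, z.val ≤ a.val := fun z hz => hI1mem z (hsub1 hz)
      have m2 : ∀ z ∈ W2, a.val < z.val ∧ z.val < b.val := fun z hz => hI2mem z (hsub2 hz)
      have m3 : ∀ z ∈ W3, b.val ≤ z.val := fun z hz => hI3mem z (hsub3 hz)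
      have hx1 : (W1.max' h1).val ≤ a.val := m1 _ (W1.max'_mem h1)
      have hy3 : b.val ≤ (W3.min' h3).val := m3 _ (W3.min'_mem h3)
      refine ⟨?_, ?_, ?_⟩
      · ext z
        simp only [Finset.mem_insert, Finset.mem_filter, Finset.mem_union, Finset.mem_erase]
        constructor
        · intro hz
          by_cases hzx : z = W1.max' h1
          · exact Or.inl hzx
          · exact Or.inr ⟨Or.inl (Or.inl ⟨hzx, hz⟩), m1 z hz⟩
        · rintro (rfl | ⟨(⟨_, hz⟩ | hz) | ⟨_, hz⟩, hza⟩)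
          · exact W1.max'_mem h1
          · exact hz
          · have := m2 z hz; omega
          · have := m3 z hz; omega
      · ext z
        simp only [Finset.mem_filter, Finset.mem_union, Finset.mem_erase]
        constructor
        · intro hz
          exact ⟨Or.inl (Or.inr hz), m2 z hz⟩
        · rintro ⟨(⟨_, hz⟩ | hz) | ⟨_, hz⟩, hza⟩
          · have := m1 z hz; omega
          · exact hz
          · have := m3 z hz; omega
      · ext z
        simp only [Finset.mem_insert, Finset.mem_filter, Finset.mem_union, Finset.mem_erase]
        constructor
        · intro hz
          by_cases hzy : z = W3.min' h3
          · exact Or.inl hzy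
          · exact Or.inr ⟨Or.inr ⟨hzy, hz⟩, m3 z hz⟩
        · rintro (rfl | ⟨(⟨_, hz⟩ | hz) | ⟨_, hz⟩, hza⟩)
          · exact W3.min'_mem h3
          · have := m1 z hz; omega
          · have := m2 z hz; omega
          · exact hz
    obtain ⟨r1, r2, r3⟩ := recover W.1 W.2.1 W.2.2 hne1 hne3 hs1 hs2 hs3
    obtain ⟨r1', r2', r3'⟩ := recover V.1 V.2.1 V.2.2 hne1' hne3' hs1' hs2' hs3'
    have e1 : W.1 = V.1 := by rw [r1, r1', ← eS, ← ex]
    have e2 : W.2.1 = V.2.1 := by rw [r2, r2', ← eS]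
    have e3 : W.2.2 = V.2.2 := by rw [r3, r3', ← eS, ← ey]
    exact Prod.ext e1 (Prod.ext e2 e3)
  -- cardinality of src
  have hcard : src.card = (2 ^ (a.val + 1) - 1) * ((2 ^ (b.val - (a.val + 1)) - 1) *
      (2 ^ (n - b.val) - 1)) := by
    rw [hsrc, Finset.card_product, Finset.card_product, hP1, hP2, hP3,
      card_ne_powerset, card_ne_powerset, card_ne_powerset, hI1, hI2, hI3,
      card_le_val a.val a.isLt, card_between_val a.val b.val (le_of_lt b.isLt),
      card_ge_val b.val]
  have hbound : 2 ^ (n - 2) - 1 ≤ src.card := by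
    rw [hcard]
    have s1 : 2 ^ ((b.val - (a.val + 1)) + (n - b.val) - 1) - 1 ≤
        (2 ^ (b.val - (a.val + 1)) - 1) * (2 ^ (n - b.val) - 1) :=
      two_pow_mul_lb _ _ (by omega) (by have := b.isLt; omega)
    have s2 : 2 ^ ((a.val + 1) + ((b.val - (a.val + 1)) + (n - b.val) - 1) - 1) - 1 ≤
        (2 ^ (a.val + 1) - 1) * (2 ^ ((b.val - (a.val + 1)) + (n - b.val) - 1) - 1) :=
      two_pow_mul_lb _ _ (by omega) (by have := b.isLt; omega)
    have e : (a.val + 1) + ((b.val - (a.val + 1)) + (n - b.val) - 1) - 1 = n - 2 := by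
      have := b.isLt; omega
    calc 2 ^ (n - 2) - 1 = 2 ^ ((a.val + 1) + ((b.val - (a.val + 1)) + (n - b.val) - 1) - 1) - 1 := by
          rw [e]
      _ ≤ (2 ^ (a.val + 1) - 1) * (2 ^ ((b.val - (a.val + 1)) + (n - b.val) - 1) - 1) := s2
      _ ≤ _ := Nat.mul_le_mul_left _ s1
  have hfin : (Dset (SimpleGraph.pathGraph n) G').Finite := Set.toFinite _
  have := Set.ncard_le_ncard_of_injOn f (fun W hW => hmapsto W (Finset.mem_coe.mp hW)) hinj hfin
  rw [Set.ncard_coe_finset] at this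
  rw [sepDist_eq_Dset]
  exact le_trans hbound this

lemma lower_bound (hn : 3 ≤ n) (G' : SimpleGraph (Fin n))
    (hne : G' ≠ SimpleGraph.pathGraph n) :
    2 ^ (n - 2) - 1 ≤ sepDist (SimpleGraph.pathGraph n) G' := by
  by_cases hcut : ∃ j, j + 1 < n ∧ ∀ u v : Fin n, u.val ≤ j → j < v.val → ¬ G'.Adj u v
  · obtain ⟨j, hj, hc⟩ := hcut
    exact case_cut G' j hj hc
  push_neg at hcut
  by_cases hfull : ∀ u v : Fin n, G'.Adj u v → (u.val + 1 = v.val ∨ v.val + 1 = u.val)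
  · exfalso
    apply hne
    have hstep : ∀ (j : ℕ) (h1 : j < n) (h2 : j + 1 < n), G'.Adj ⟨j, h1⟩ ⟨j + 1, h2⟩ := by
      intro j h1 h2
      obtain ⟨p, q, hp, hq, hpq⟩ := hcut j h2
      rcases hfull p q hpq with h | h
      · have hp' : p = ⟨j, h1⟩ := Fin.ext (by simp; omega)
        have hq' : q = ⟨j + 1, h2⟩ := Fin.ext (by simp; omega)
        rwa [hp', hq'] at hpq
      · omega
    ext u v
    rw [SimpleGraph.pathGraph_adj]
    constructor
    · exact hfull u v
    · rintro (h | h)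
      · have := hstep u.val u.isLt (by omega)
        have hv : v = ⟨u.val + 1, by omega⟩ := Fin.ext (by simp; omega)
        rwa [hv]
      · have := hstep v.val v.isLt (by omega)
        have hu : u = ⟨v.val + 1, by omega⟩ := Fin.ext (by simp; omega)
        rw [hu]
        exact this.symm
  push_neg at hfull
  obtain ⟨u, v, huv, hc1, hc2⟩ := hfull
  have hune : u.val ≠ v.val := fun h => huv.ne (Fin.ext h)
  -- normalize the extra edge
  obtain ⟨a, b, hab, ho⟩ : ∃ a b : Fin n, G'.Adj a b ∧ a.val + 2 ≤ b.val := by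
    rcases lt_or_gt_of_ne hune with h | h
    · exact ⟨u, v, huv, by omega⟩
    · exact ⟨v, u, huv.symm, by omega⟩
  by_cases hD : ∀ (j : ℕ) (h1 : j < n) (h2 : j + 1 < n), (j + 1 ≤ a.val ∨ b.val ≤ j) →
      G'.Adj ⟨j, h1⟩ ⟨j + 1, h2⟩
  · exact case_one_edge hn G' a b hab ho hD
  push_neg at hD
  obtain ⟨j, h1, h2, hside, hnadj⟩ := hD
  obtain ⟨p, q, hp, hq, hpq⟩ := hcut j h2
  have hextra : p.val + 2 ≤ q.val := by
    rcases Nat.lt_or_ge (p.val + 1) q.val with h | h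
    · omega
    · exfalso
      have hq1 : q.val = p.val + 1 := by omega
      have hp' : p = ⟨j, h1⟩ := Fin.ext (by simp; omega)
      have hq' : q = ⟨j + 1, h2⟩ := Fin.ext (by simp; omega)
      rw [hp', hq'] at hpq
      exact hnadj hpq
  rcases hside with h | h
  · exact case_two_edges hn G' a b p q hab hpq ho hextra
      (Or.inl (fun he => by rw [Fin.ext_iff] at he; omega))
  · exact case_two_edges hn G' a b p q hab hpq ho hextra
      (Or.inr (fun he => by rw [Fin.ext_iff] at he; omega))

def vz (hn : 3 ≤ n) : Fin n := ⟨0, by omega⟩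
def vo (hn : 3 ≤ n) : Fin n := ⟨1, by omega⟩
def vt (hn : 3 ≤ n) : Fin n := ⟨2, by omega⟩

def G2 (hn : 3 ≤ n) : SimpleGraph (Fin n) :=
  SimpleGraph.pathGraph n ⊔ SimpleGraph.fromEdgeSet {s(vz hn, vt hn)}

lemma vz_ne_vt (hn : 3 ≤ n) : vz hn ≠ vt hn := by
  rw [Fin.ne_iff_vne]; simp [vz, vt]

lemma G2_adj (hn : 3 ≤ n) (u v : Fin n) : (G2 hn).Adj u v ↔
    ((SimpleGraph.pathGraph n).Adj u v ∨ (u = vz hn ∧ v = vt hn) ∨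
      (u = vt hn ∧ v = vz hn)) := by
  rw [G2, SimpleGraph.sup_adj, SimpleGraph.fromEdgeSet_adj]
  constructor
  · rintro (h | ⟨h, hne⟩)
    · exact Or.inl h
    · rw [Set.mem_singleton_iff, Sym2.eq_iff] at h
      exact Or.inr h
  · rintro (h | ⟨rfl, rfl⟩ | ⟨rfl, rfl⟩)
    · exact Or.inl h
    · exact Or.inr ⟨by rw [Set.mem_singleton_iff], vz_ne_vt hn⟩
    · exact Or.inr ⟨by rw [Set.mem_singleton_iff, Sym2.eq_iff]; right; exact ⟨rfl, rfl⟩,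
        (vz_ne_vt hn).symm⟩

lemma pathGraph_le_G2 (hn : 3 ≤ n) : SimpleGraph.pathGraph n ≤ G2 hn := le_sup_left

lemma sep_G2_of (hn : 3 ≤ n) {x y z : Fin n} {S : Finset (Fin n)} (hz : z ∈ S)
    (h2z : 2 ≤ z.val) (h1 : x.val < z.val) (h2 : z.val ≤ y.val) :
    Separates (G2 hn) x y S := by
  intro p
  obtain ⟨u, v, hadj, hu, hv, _, hvs⟩ :=
    walk_cross _ p (fun w => w.val < z.val) h1 (by simp; omega)
  simp only [not_lt] at hv
  rw [G2_adj] at hadj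
  rcases hadj with h | ⟨hu0, hv2⟩ | ⟨hu2, hv0⟩
  · rw [SimpleGraph.pathGraph_adj] at h
    rcases h with h | h
    · have : v = z := Fin.ext (by omega)
      exact ⟨v, hvs, this ▸ hz⟩
    · omega
  · have hv2' : v.val = 2 := by rw [hv2]; rfl
    have : v = z := Fin.ext (by omega)
    exact ⟨v, hvs, this ▸ hz⟩
  · have hu2' : u.val = 2 := by rw [hu2]; rfl
    have hv0' : v.val = 0 := by rw [hv0]; rfl
    omega

lemma not_sep_G2_shortcut (hn : 3 ≤ n) {y : Fin n} {S : Finset (Fin n)}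
    (h2y : 2 ≤ y.val) (h0S : vz hn ∉ S) (hyS : y ∉ S)
    (hS : ∀ z ∈ S, z.val < 2 ∨ y.val ≤ z.val) :
    ¬ Separates (G2 hn) (vz hn) y S := by
  obtain ⟨p2, hp2⟩ := walk_exists (G2 hn) (vt hn) (y.val - 2) y
    (by simp only [vt]; omega)
    (fun j h1 h2 hj1 hj2 => by
      rw [G2_adj]; left; rw [SimpleGraph.pathGraph_adj]; left; rfl)
  have hadj02 : (G2 hn).Adj (vz hn) (vt hn) := by
    rw [G2_adj]; right; left; exact ⟨rfl, rfl⟩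
  intro hsep
  obtain ⟨w, hw, hwS⟩ := hsep (SimpleGraph.Walk.cons hadj02 p2)
  rw [SimpleGraph.Walk.support_cons, List.mem_cons] at hw
  rcases hw with rfl | hw
  · exact h0S hwS
  · have hb := hp2 w hw
    simp only [vt] at hb
    rcases hS w hwS with h | h
    · omega
    · have : w = y := Fin.ext (by omega)
      exact hyS (this ▸ hwS)

lemma charP (x y : Fin n) (S : Finset (Fin n)) (hxy : x.val < y.val)
    (hxS : x ∉ S) (hyS : y ∉ S) :
    Separates (SimpleGraph.pathGraph n) x y S ↔
      ∃ z ∈ S, x.val < z.val ∧ z.val < y.val := by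
  constructor
  · intro h
    by_contra hc
    push_neg at hc
    refine not_sep_pathGraph (le_of_lt hxy) (fun z hz => ?_) h
    have h1 : z ≠ x := fun he => hxS (he ▸ hz)
    have h2 : z ≠ y := fun he => hyS (he ▸ hz)
    rw [Fin.ne_iff_vne] at h1 h2
    have := hc z hz
    omega
  · rintro ⟨z, hz, h1, h2⟩
    exact sep_pathGraph_of hz h1 (by omega)

lemma charG2 (hn : 3 ≤ n) (y : Fin n) (S : Finset (Fin n)) (h2y : 2 ≤ y.val)
    (hxS : vz hn ∉ S) (hyS : y ∉ S) :
    Separates (G2 hn) (vz hn) y S ↔ ∃ z ∈ S, 2 ≤ z.val ∧ z.val < y.val := by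
  constructor
  · intro h
    by_contra hc
    push_neg at hc
    refine not_sep_G2_shortcut hn h2y hxS hyS (fun z hz => ?_) h
    have := hc z hz
    omega
  · rintro ⟨z, hz, h1, h2⟩
    exact sep_G2_of hn hz h1 (by simp [vz]; omega) (by omega)

lemma charG2' (hn : 3 ≤ n) (x y : Fin n) (S : Finset (Fin n)) (hx1 : 1 ≤ x.val)
    (hxy : x.val < y.val) (hxS : x ∉ S) (hyS : y ∉ S) :
    Separates (G2 hn) x y S ↔ ∃ z ∈ S, x.val < z.val ∧ z.val < y.val := by
  constructor
  · intro h
    exact (charP x y S hxy hxS hyS).mp (sep_mono (pathGraph_le_G2 hn) h)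
  · rintro ⟨z, hz, h1, h2⟩
    exact sep_G2_of hn hz (by omega) h1 (by omega)

lemma Dset_G2_char (hn : 3 ≤ n) (x y : Fin n) (S : Finset (Fin n)) :
    (x, y, S) ∈ Dset (SimpleGraph.pathGraph n) (G2 hn) ↔
      (x = vz hn ∧ 2 ≤ y.val ∧ x ∉ S ∧ y ∉ S ∧ vo hn ∈ S ∧
        ∀ z ∈ S, z.val < 2 ∨ y.val ≤ z.val) := by
  rw [mem_Dset]
  constructor
  · rintro ⟨hlt, hxS, hyS, hdif⟩
    rw [Fin.lt_def] at hlt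
    have hx0 : x.val = 0 := by
      by_contra hx0
      exact hdif ((charP x y S hlt hxS hyS).trans
        (charG2' hn x y S (by omega) hlt hxS hyS).symm)
    have hx : x = vz hn := Fin.ext (by simp [vz, hx0])
    subst hx
    have h2y : 2 ≤ y.val := by
      by_contra h2y
      have hy1 : y.val = 1 := by simp [vz] at hlt; omega
      refine hdif (iff_of_false ?_ ?_)
      · rw [charP _ y S hlt hxS hyS]
        push_neg
        intro z hz
        simp [vz] at *
        omega
      · intro h
        have := (charP _ y S hlt hxS hyS).mp (sep_mono (pathGraph_le_G2 hn) h)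
        obtain ⟨z, _, h1, h2⟩ := this
        omega
    rw [charP _ y S hlt hxS hyS, charG2 hn y S h2y hxS hyS] at hdif
    have himp : (∃ z ∈ S, 2 ≤ z.val ∧ z.val < y.val) →
        (∃ z ∈ S, (vz hn).val < z.val ∧ z.val < y.val) := by
      rintro ⟨z, hz, h1, h2⟩
      exact ⟨z, hz, by simp [vz]; omega, h2⟩
    have h1 : (∃ z ∈ S, (vz hn).val < z.val ∧ z.val < y.val) ∧
        ¬(∃ z ∈ S, 2 ≤ z.val ∧ z.val < y.val) := by
      by_cases hA : ∃ z ∈ S, (vz hn).val < z.val ∧ z.val < y.val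
      · by_cases hB : ∃ z ∈ S, 2 ≤ z.val ∧ z.val < y.val
        · exact absurd (iff_of_true hA hB) hdif
        · exact ⟨hA, hB⟩
      · exact absurd (iff_of_false hA (fun h => hA (himp h))) hdif
    obtain ⟨⟨z, hz, hz1, hz2⟩, hB⟩ := h1
    push_neg at hB
    have hz1' : z.val = 1 := by
      have := hB z hz
      simp [vz] at hz1
      omega
    refine ⟨rfl, h2y, hxS, hyS, ?_, fun w hw => ?_⟩
    · have : z = vo hn := Fin.ext (by simp [vo, hz1'])
      exact this ▸ hz
    · have := hB w hw
      omega
  · rintro ⟨rfl, h2y, hxS, hyS, hoS, hcond⟩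
    have hlt : (vz hn).val < y.val := by simp [vz]; omega
    refine ⟨by rw [Fin.lt_def]; exact hlt, hxS, hyS, ?_⟩
    rw [charP _ y S hlt hxS hyS, charG2 hn y S h2y hxS hyS]
    intro hiff
    have hA : ∃ z ∈ S, (vz hn).val < z.val ∧ z.val < y.val :=
      ⟨vo hn, hoS, by simp [vz, vo], by simp [vo]; omega⟩
    obtain ⟨z, hz, h1, h2⟩ := hiff.mp hA
    have := hcond z hz
    omega

lemma G2_ne (hn : 3 ≤ n) : G2 hn ≠ SimpleGraph.pathGraph n := by
  intro h
  have hadj : (G2 hn).Adj (vz hn) (vt hn) := by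
    rw [G2_adj]; right; left; exact ⟨rfl, rfl⟩
  rw [h, SimpleGraph.pathGraph_adj] at hadj
  simp [vz, vt] at hadj

lemma count_G2 (hn : 3 ≤ n) :
    (Dset (SimpleGraph.pathGraph n) (G2 hn)).ncard = 2 ^ (n - 2) - 1 := by
  classical
  set NE : Finset (Finset (Fin n)) :=
    Finset.univ.filter (fun A : Finset (Fin n) => A.Nonempty ∧ ∀ z ∈ A, 2 ≤ z.val) with hNE
  have hNEcard : NE.card = 2 ^ (n - 2) - 1 := by
    have he : NE = ((Finset.univ.filter (fun z : Fin n => 2 ≤ z.val)).powerset).erase ∅ := by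
      ext A
      simp only [hNE, Finset.mem_filter, Finset.mem_univ, true_and, Finset.mem_erase,
        Finset.mem_powerset, Finset.subset_iff]
      constructor
      · rintro ⟨h1, h2⟩
        exact ⟨Finset.nonempty_iff_ne_empty.mp h1, fun z hz => h2 z hz⟩
      · rintro ⟨h1, h2⟩
        exact ⟨Finset.nonempty_iff_ne_empty.mpr h1, fun z hz => h2 z hz⟩
    rw [he, card_ne_powerset, card_ge_val 2]
  refine le_antisymm ?_ ?_
  · -- injection into NE
    set g : (Fin n × Fin n × Finset (Fin n)) → Finset (Fin n) :=
      fun t => insert t.2.1 (t.2.2.erase (vo hn)) with hg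
    have hmaps : ∀ t ∈ Dset (SimpleGraph.pathGraph n) (G2 hn), g t ∈ (↑NE : Set (Finset (Fin n))) := by
      rintro ⟨x, y, S⟩ ht
      rw [Dset_G2_char hn] at ht
      obtain ⟨rfl, h2y, hxS, hyS, hoS, hcond⟩ := ht
      simp only [hg, hNE, Finset.coe_filter, Set.mem_setOf_eq, Finset.mem_univ, true_and]
      refine ⟨⟨y, Finset.mem_insert_self _ _⟩, fun z hz => ?_⟩
      rw [Finset.mem_insert, Finset.mem_erase] at hz
      rcases hz with rfl | ⟨hz1, hz2⟩
      · exact h2y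
      · rcases hcond z hz2 with h | h
        · exfalso
          rw [Fin.ne_iff_vne] at hz1
          have hzo : z.val = 0 := by simp only [vo] at hz1; omega
          have : z = vz hn := Fin.ext (by simp only [vz]; omega)
          exact hxS (this ▸ hz2)
        · omega
    have hinj : Set.InjOn g (Dset (SimpleGraph.pathGraph n) (G2 hn)) := by
      rintro ⟨x, y, S⟩ ht ⟨x', y', S'⟩ ht' heq
      rw [Dset_G2_char hn] at ht ht'
      obtain ⟨rfl, h2y, hxS, hyS, hoS, hcond⟩ := ht
      obtain ⟨rfl, h2y', hxS', hyS', hoS', hcond'⟩ := ht'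
      simp only [hg] at heq
      have hyy : y = y' := by
        by_contra hne
        have hy1 : y ∈ insert y' (S'.erase (vo hn)) := by
          rw [← heq]; exact Finset.mem_insert_self _ _
        have hy2 : y' ∈ insert y (S.erase (vo hn)) := by
          rw [heq]; exact Finset.mem_insert_self _ _
        rw [Finset.mem_insert, Finset.mem_erase] at hy1 hy2
        rcases hy1 with h | ⟨_, h⟩
        · exact hne h
        rcases hy2 with h' | ⟨_, h'⟩
        · exact hne h'.symm
        have c1 := hcond' y h
        have c2 := hcond y' h'
        have : y = y' := Fin.ext (by omega)
        exact hne this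
      subst hyy
      have hSe : S.erase (vo hn) = S'.erase (vo hn) := by
        have h1 : y ∉ S.erase (vo hn) := fun h => hyS (Finset.mem_of_mem_erase h)
        have h2 : y ∉ S'.erase (vo hn) := fun h => hyS' (Finset.mem_of_mem_erase h)
        have := congrArg (fun A : Finset (Fin n) => A.erase y) heq
        simpa [Finset.erase_insert_of_ne, Finset.erase_eq_of_notMem h1,
          Finset.erase_eq_of_notMem h2, Finset.erase_insert h1, Finset.erase_insert h2]
          using this
      have hSS : S = S' := by
        rw [← Finset.insert_erase hoS, ← Finset.insert_erase hoS', hSe]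
      rw [hSS]
  -- ≤ NE.card
    have hle := Set.ncard_le_ncard_of_injOn g hmaps hinj (Set.toFinite _)
    rw [Set.ncard_coe_finset] at hle
    omega
  · have := lower_bound hn (G2 hn) (G2_ne hn)
    rw [sepDist_eq_Dset] at this
    omega

theorem chain_nearest_neighbor {n : ℕ} (hn : 3 ≤ n) :
    (∀ G' : SimpleGraph (Fin n), G' ≠ SimpleGraph.pathGraph n →
      2 ^ (n - 2) - 1 ≤ sepDist (SimpleGraph.pathGraph n) G') ∧
    ∃ G' : SimpleGraph (Fin n),
      (∃ e : Sym2 (Fin n), ¬ e.IsDiag ∧ e ∉ (SimpleGraph.pathGraph n).edgeSet ∧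
        G' = SimpleGraph.pathGraph n ⊔ SimpleGraph.fromEdgeSet {e}) ∧
      sepDist (SimpleGraph.pathGraph n) G' = 2 ^ (n - 2) - 1 := by
  constructor
  · exact fun G' hne => lower_bound hn G' hne
  · refine ⟨G2 hn, ⟨s(vz hn, vt hn), ?_, ?_, rfl⟩, ?_⟩
    · rw [Sym2.mk_isDiag_iff]
      exact vz_ne_vt hn
    · rw [SimpleGraph.mem_edgeSet, SimpleGraph.pathGraph_adj]
      simp [vz, vt]
    · rw [sepDist_eq_Dset, count_G2 hn]
end

section
/- Let D be a DAG whose skeleton is a path on vertices v1, ..., vn (in path order), and let C be the set of colliders of D. For 1 ≤ i < j ≤ n, let S_{i,j} = {v_k : i < k < j} and C_{i,j} = C ∩ S_{i,j}. Then for any Z ⊆ V \ {v_i, v_j}, the vertices v_i and v_j are d-connected given Z in D if and only if Z ∩ S_{i,j} = C_{i,j}. -/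
/-- A directed graph on `Fin n` is a binary relation; it is a DAG when it has no
directed cycle. -/
def IsDAG {n : ℕ} (D : Fin n → Fin n → Prop) : Prop :=
  ∀ v, ¬ Relation.TransGen D v v

/-- The skeleton (underlying undirected graph) of a directed graph. -/
def Skel {n : ℕ} (D : Fin n → Fin n → Prop) : SimpleGraph (Fin n) where
  Adj a b := a ≠ b ∧ (D a b ∨ D b a)
  symm := ⟨fun a b h => ⟨h.1.symm, h.2.symm⟩⟩
  loopless := ⟨fun a h => h.1 rfl⟩

/-- `y` is a descendant of `x` (including `x` itself). -/
def Desc {n : ℕ} (D : Fin n → Fin n → Prop) (x y : Fin n) : Prop :=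
  Relation.ReflTransGen D x y

/-- A path (in the skeleton) from `u` to `v`, as a list of distinct vertices with
consecutive vertices adjacent in the skeleton. -/
def IsSkelPath {n : ℕ} (D : Fin n → Fin n → Prop) (u v : Fin n) (p : List (Fin n)) : Prop :=
  p.Nodup ∧ p.head? = some u ∧ p.getLast? = some v ∧
    p.Chain' (fun a b => D a b ∨ D b a)

/-- Position `i` of the list `p` is a collider: both neighboring arcs point into it. -/
def ColliderAt {n : ℕ} [NeZero n] (D : Fin n → Fin n → Prop) (p : List (Fin n)) (i : ℕ) : Prop :=
  D (p.getD (i - 1) default) (p.getD i default) ∧ D (p.getD (i + 1) default) (p.getD i default)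

/-- The path `p` is blocked by `Z`: some internal position is a non-collider in `Z`,
or a collider none of whose descendants (including itself) lies in `Z`. -/
def Blocked {n : ℕ} [NeZero n] (D : Fin n → Fin n → Prop) (Z : Finset (Fin n))
    (p : List (Fin n)) : Prop :=
  ∃ i : ℕ, 0 < i ∧ i + 1 < p.length ∧
    ((¬ ColliderAt D p i ∧ p.getD i default ∈ Z) ∨
      (ColliderAt D p i ∧ ∀ w, Desc D (p.getD i default) w → w ∉ Z))

/-- `u` and `v` are d-separated given `Z` in `D`. -/
def DSep {n : ℕ} [NeZero n] (D : Fin n → Fin n → Prop) (u v : Fin n)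
    (Z : Finset (Fin n)) : Prop :=
  ∀ p : List (Fin n), IsSkelPath D u v p → Blocked D Z p

/-- The d-separation distance between two directed graphs on `Fin n`: the number of
triples `(u, v, Z)` with `u < v` and `Z ⊆ V \ {u, v}` on which their d-separation
relations differ. -/
noncomputable def dSepDist {n : ℕ} [NeZero n] (D₁ D₂ : Fin n → Fin n → Prop) : ℕ :=
  Set.ncard {t : Fin n × Fin n × Finset (Fin n) |
    t.1 < t.2.1 ∧ t.1 ∉ t.2.2 ∧ t.2.1 ∉ t.2.2 ∧
    ¬ (DSep D₁ t.1 t.2.1 t.2.2 ↔ DSep D₂ t.1 t.2.1 t.2.2)}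

/-- A vertex is a collider (of a DAG with a path skeleton) if it has two distinct
parents. -/
def IsColliderVertex {n : ℕ} (D : Fin n → Fin n → Prop) (k : Fin n) : Prop :=
  ∃ a b, a ≠ b ∧ D a k ∧ D b k

/-- Two directed graphs entail the same d-separation relations. -/
def MarkovEquiv {n : ℕ} [NeZero n] (D₁ D₂ : Fin n → Fin n → Prop) : Prop :=
  ∀ (u v : Fin n) (Z : Finset (Fin n)), u ≠ v → u ∉ Z → v ∉ Z →
    (DSep D₁ u v Z ↔ DSep D₂ u v Z)

lemma mono_aux {n : ℕ} [NeZero n] : ∀ (p : List (Fin n)),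
    p.Nodup →
    p.Chain' (fun a b : Fin n => (a:ℕ)+1 = (b:ℕ) ∨ (b:ℕ)+1 = (a:ℕ)) →
    ∀ a : Fin n, p.head? = some a →
    (∀ k, k < p.length → ((p.getD k default : Fin n) : ℕ) = (a:ℕ) + k) ∨
    (∀ k, k < p.length → k ≤ (a:ℕ) ∧ ((p.getD k default : Fin n) : ℕ) = (a:ℕ) - k) := by
  intro p
  induction p with
  | nil => intro _ _ a ha; simp at ha
  | cons x rest ih =>
    intro hnd hch a ha
    simp only [List.head?_cons, Option.some.injEq] at ha
    subst ha
    match rest, hch with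
    | [], _ =>
      left; intro k hk
      simp only [List.length_cons, List.length_nil] at hk
      match k with
      | 0 => simp
      | (k'+1) => omega
    | c :: rest', hch =>
      rw [List.Chain', List.isChain_cons_cons] at hch
      obtain ⟨hRac, hch'⟩ := hch
      have hnd' : (c :: rest').Nodup := hnd.of_cons
      have hanotin : x ∉ (c :: rest') := (List.nodup_cons.mp hnd).1
      have := ih hnd' hch' c rfl
      rcases hRac with hac | hca
      · -- a+1 = c
        rcases this with hinc | hdec
        · left
          intro k hk
          match k with
          | 0 => simp
          | (k'+1) =>
            rw [List.getD_cons_succ]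
            have := hinc k' (by simpa using hk)
            omega
        · -- rest decreasing
          by_cases hl : 2 ≤ (c :: rest').length
          · exfalso
            have h1 := hdec 1 (by omega)
            have : ((c :: rest').getD 1 default) = x := by
              apply Fin.ext; omega
            rw [List.getD_eq_getElem _ _ (by omega)] at this
            exact hanotin (this ▸ List.getElem_mem _)
          · left
            intro k hk
            simp only [List.length_cons] at hk hl
            match k with
            | 0 => simp
            | 1 => rw [List.getD_cons_succ]
                   have := hdec 0 (by simp)
                   simp only [List.getD_cons_zero] at this ⊢
                   omega
            | (k'+2) => omega
      · -- c + 1 = a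
        rcases this with hinc | hdec
        · by_cases hl : 2 ≤ (c :: rest').length
          · exfalso
            have h1 := hinc 1 (by omega)
            have : ((c :: rest').getD 1 default) = x := by
              apply Fin.ext; omega
            rw [List.getD_eq_getElem _ _ (by omega)] at this
            exact hanotin (this ▸ List.getElem_mem _)
          · right
            intro k hk
            simp only [List.length_cons] at hk hl
            match k with
            | 0 => simp
            | 1 => rw [List.getD_cons_succ]
                   have := hinc 0 (by simp)
                   simp only [List.getD_cons_zero] at this ⊢
                   omega
            | (k'+2) => omega
        · right
          intro k hk
          match k with
          | 0 => simp
          | (k'+1) =>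
            rw [List.getD_cons_succ]
            have := hdec k' (by simpa using hk)
            omega

theorem path_dconnection_characterization {n : ℕ} [NeZero n]
    (D : Fin n → Fin n → Prop) (hD : IsDAG D)
    (hskel : Skel D = SimpleGraph.pathGraph n)
    (i j : Fin n) (hij : i < j) (Z : Finset (Fin n)) (hiZ : i ∉ Z) (hjZ : j ∉ Z) :
    ¬ DSep D i j Z ↔
      ∀ k : Fin n, i < k → k < j → (k ∈ Z ↔ IsColliderVertex D k) := by
  have hDirr : ∀ a, ¬ D a a := fun a h => hD a (Relation.TransGen.single h)
  have hD2 : ∀ a b, D a b → ¬ D b a := fun a b h h' =>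
    hD a (Relation.TransGen.head h (Relation.TransGen.single h'))
  have hadj : ∀ a b : Fin n, (D a b ∨ D b a) ↔ ((a:ℕ)+1 = (b:ℕ) ∨ (b:ℕ)+1 = (a:ℕ)) := by
    intro a b
    constructor
    · intro h
      have hne : a ≠ b := by rintro rfl; rcases h with h|h <;> exact hDirr a h
      have : (Skel D).Adj a b := ⟨hne, h⟩
      rwa [hskel, SimpleGraph.pathGraph_adj] at this
    · intro h
      have h2 : (SimpleGraph.pathGraph n).Adj a b := SimpleGraph.pathGraph_adj.mpr h
      rw [← hskel] at h2; exact h2.2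
  -- structure of any skeleton path from i to j
  have hstruct : ∀ p : List (Fin n), IsSkelPath D i j p →
      p.length = (j:ℕ) - (i:ℕ) + 1 ∧
      ∀ k, k < p.length → ((p.getD k default : Fin n) : ℕ) = (i:ℕ) + k := by
    rintro p ⟨hnd, hhd, hlast, hch⟩
    have hch' : p.Chain' (fun a b : Fin n => (a:ℕ)+1 = (b:ℕ) ∨ (b:ℕ)+1 = (a:ℕ)) :=
      List.IsChain.imp (fun a b hab => (hadj a b).mp hab) hch
    have hmono := mono_aux p hnd hch' i hhd
    have hpos : 0 < p.length := by
      cases p with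
      | nil => simp at hhd
      | cons x r => simp
    have hlastval : ((p.getD (p.length - 1) default : Fin n)) = j := by
      rw [List.getLast?_eq_getElem?] at hlast
      rw [List.getD_eq_getElem _ _ (by omega)]
      rw [List.getElem?_eq_getElem (by omega)] at hlast
      exact Option.some_injective _ hlast
    rcases hmono with hinc | hdec
    · have hlv := hinc (p.length - 1) (by omega)
      rw [hlastval] at hlv
      have : (i:ℕ) < (j:ℕ) := hij
      constructor
      · omega
      · exact hinc
    · exfalso
      have hlv := hdec (p.length - 1) (by omega)
      rw [hlastval] at hlv
      have : (i:ℕ) < (j:ℕ) := hij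
      omega
  -- colliders have no proper descendants
  have hcoll : ∀ v : Fin n, IsColliderVertex D v → ∀ w, Desc D v w → w = v := by
    rintro v ⟨a, b, hab, ha, hb⟩ w hw
    have ha' := (hadj a v).mp (Or.inl ha)
    have hb' := (hadj b v).mp (Or.inl hb)
    have hab' : (a:ℕ) ≠ (b:ℕ) := fun h => hab (Fin.ext h)
    have hout : ∀ c, ¬ D v c := by
      intro c hc
      have hc' := (hadj v c).mp (Or.inl hc)
      have : c = a ∨ c = b := by
        have : (c:ℕ) = (a:ℕ) ∨ (c:ℕ) = (b:ℕ) := by omega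
        rcases this with h|h
        · exact Or.inl (Fin.ext h)
        · exact Or.inr (Fin.ext h)
      rcases this with rfl|rfl
      · exact hD2 c v ha hc
      · exact hD2 c v hb hc
    rcases Relation.ReflTransGen.cases_head hw with h | ⟨c, hc, _⟩
    · exact h.symm
    · exact absurd hc (hout c)
  -- ColliderAt on a structured path corresponds to IsColliderVertex
  have hcollat : ∀ (p : List (Fin n)),
      (∀ k, k < p.length → ((p.getD k default : Fin n) : ℕ) = (i:ℕ) + k) →
      ∀ m : ℕ, 0 < m → m + 1 < p.length →
      (ColliderAt D p m ↔ IsColliderVertex D (p.getD m default)) := by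
    intro p hval m hm0 hm1
    have hv : ((p.getD m default : Fin n):ℕ) = (i:ℕ) + m := hval m (by omega)
    have hvm : ((p.getD (m-1) default : Fin n):ℕ) = (i:ℕ) + (m-1) := hval (m-1) (by omega)
    have hvp : ((p.getD (m+1) default : Fin n):ℕ) = (i:ℕ) + (m+1) := hval (m+1) hm1
    constructor
    · rintro ⟨h1, h2⟩
      refine ⟨_, _, ?_, h1, h2⟩
      intro h
      rw [h] at hvm
      omega
    · rintro ⟨a, b, hab, ha, hb⟩
      have ha' := (hadj a _).mp (Or.inl ha)
      have hb' := (hadj b _).mp (Or.inl hb)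
      have hab' : (a:ℕ) ≠ (b:ℕ) := fun h => hab (Fin.ext h)
      have hkey : (a = p.getD (m-1) default ∧ b = p.getD (m+1) default) ∨
          (b = p.getD (m-1) default ∧ a = p.getD (m+1) default) := by
        rcases ha' with h|h
        · left
          constructor
          · exact Fin.ext (by omega)
          · exact Fin.ext (by omega)
        · right
          constructor
          · exact Fin.ext (by omega)
          · exact Fin.ext (by omega)
      rcases hkey with ⟨rfl, rfl⟩ | ⟨rfl, rfl⟩
      · exact ⟨ha, hb⟩
      · exact ⟨hb, ha⟩
  -- blocked on a structured path iff some internal vertex violates the condition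
  have key : ∀ p : List (Fin n), IsSkelPath D i j p →
      (Blocked D Z p ↔ ∃ k : Fin n, i < k ∧ k < j ∧ ¬ (k ∈ Z ↔ IsColliderVertex D k)) := by
    intro p hp
    obtain ⟨hlen, hval⟩ := hstruct p hp
    constructor
    · rintro ⟨m, hm0, hm1, hcase⟩
      set v := p.getD m default with hvdef
      have hv : (v:ℕ) = (i:ℕ) + m := hval m (by omega)
      have hiv : i < v := by rw [Fin.lt_def]; omega
      have hvj : v < j := by
        rw [Fin.lt_def]
        have : (i:ℕ) < (j:ℕ) := hij
        omega
      have hca := hcollat p hval m hm0 (by omega)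
      refine ⟨v, hiv, hvj, ?_⟩
      rw [← hvdef] at hca
      rcases hcase with ⟨hnc, hz⟩ | ⟨hc, hdz⟩
      · intro hiff
        exact hnc (hca.mpr (hiff.mp hz))
      · intro hiff
        exact hdz v (Relation.ReflTransGen.refl) (hiff.mpr (hca.mp hc))
    · rintro ⟨k, hik, hkj, hne⟩
      have hik' : (i:ℕ) < (k:ℕ) := hik
      have hkj' : (k:ℕ) < (j:ℕ) := hkj
      set m := (k:ℕ) - (i:ℕ) with hmdef
      have hm1 : m + 1 < p.length := by omega
      have hv : ((p.getD m default : Fin n):ℕ) = (i:ℕ) + m := hval m (by omega)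
      have hvk : p.getD m default = k := Fin.ext (by omega)
      have hca := hcollat p hval m (by omega) hm1
      refine ⟨m, by omega, hm1, ?_⟩
      rw [hvk] at hca ⊢
      by_cases hkZ : k ∈ Z
      · left
        refine ⟨fun hc => hne ⟨fun _ => hca.mp hc, fun _ => hkZ⟩, hkZ⟩
      · right
        have hisc : IsColliderVertex D k := by
          by_contra h
          exact hne ⟨fun hz => absurd hz hkZ, fun hc => absurd hc h⟩
        refine ⟨hca.mpr hisc, ?_⟩
        intro w hw
        rw [hcoll k hisc w hw]
        exact hkZ
  -- existence of the canonical path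
  have hexists : ∃ p : List (Fin n), IsSkelPath D i j p := by
    have hij' : (i:ℕ) < (j:ℕ) := hij
    have hjn : (j:ℕ) < n := j.isLt
    refine ⟨List.ofFn (fun t : Fin ((j:ℕ) - (i:ℕ) + 1) =>
      (⟨(i:ℕ) + (t:ℕ), by omega⟩ : Fin n)), ?_, ?_, ?_, ?_⟩
    · rw [List.nodup_ofFn]
      intro s t hst
      have : (i:ℕ) + (s:ℕ) = (i:ℕ) + (t:ℕ) := congrArg Fin.val hst
      exact Fin.ext (by omega)
    · rw [List.ofFn_succ]
      simp only [List.head?_cons, Option.some.injEq]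
      exact Fin.ext (by simp)
    · rw [List.getLast?_eq_getElem?, List.length_ofFn,
        List.getElem?_eq_getElem (by simp)]
      simp only [Option.some.injEq, List.getElem_ofFn]
      exact Fin.ext (by simp; omega)
    · rw [List.Chain', List.isChain_iff_getElem]
      intro m hm
      simp only [List.length_ofFn] at hm
      simp only [List.get_eq_getElem, List.getElem_ofFn]
      apply (hadj _ _).mpr
      left
      simp only [Fin.val_mk]
      omega
  -- put it together
  constructor
  · intro hnd k hik hkj
    rw [DSep] at hnd
    push_neg at hnd
    obtain ⟨p, hp, hnb⟩ := hnd
    rw [key p hp] at hnb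
    push_neg at hnb
    have := hnb k hik hkj
    tauto
  · intro hall hds
    obtain ⟨p, hp⟩ := hexists
    have hb := hds p hp
    rw [key p hp] at hb
    obtain ⟨k, hik, hkj, hne⟩ := hb
    exact hne (hall k hik hkj)
end

section
/- Let n ≥ 4. Let D1 be the DAG on v1, ..., vn with arcs (v1, v3), (v2, v3), and (v_i, v_{i+1}) for 3 ≤ i ≤ n-1, and let D' be the DAG obtained from D1 by adding the arc (v1, v2). Then the d-separation distance between D1 and D' is exactly 1: the only triple on which they differ is (v1, v2, ∅), where v1 and v2 are d-separated by ∅ in D1 but not in D'. -/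
namespace DSepProof
set_option linter.unusedSectionVars false

variable {n : ℕ} [NeZero n]

/-- Abbreviation for the hypothesis on `D₁`. -/
def H₁ (D₁ : Fin n → Fin n → Prop) : Prop :=
  ∀ a b : Fin n, D₁ a b ↔
    ((a.1 = 0 ∧ b.1 = 2) ∨ (a.1 = 1 ∧ b.1 = 2) ∨ (2 ≤ a.1 ∧ a.1 + 1 = b.1))

/-- Abbreviation for the hypothesis on `D'`. -/
def H' (D₁ D' : Fin n → Fin n → Prop) : Prop :=
  ∀ a b : Fin n, D' a b ↔ (D₁ a b ∨ (a.1 = 0 ∧ b.1 = 1))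

/-- The "special" (extra) edge pattern. -/
def Spec (a b : Fin n) : Prop := (a.1 = 0 ∧ b.1 = 1) ∨ (a.1 = 1 ∧ b.1 = 0)

lemma getD_in {p : List (Fin n)} {i : ℕ} (h : i < p.length) :
    p.getD i default = p[i] := List.getD_eq_getElem p default h

lemma path_len_pos {D : Fin n → Fin n → Prop} {u v : Fin n} {p : List (Fin n)}
    (h : IsSkelPath D u v p) : 0 < p.length := by
  rcases p with _ | ⟨a, t⟩
  · simpa using h.2.1
  · simp

lemma path_head {D : Fin n → Fin n → Prop} {u v : Fin n} {p : List (Fin n)}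
    (h : IsSkelPath D u v p) : p.getD 0 default = u := by
  have h1 := h.2.1
  rw [List.head?_eq_getElem?, List.getElem?_eq_getElem (path_len_pos h)] at h1
  rw [getD_in (path_len_pos h)]
  exact Option.some.inj h1

lemma path_last {D : Fin n → Fin n → Prop} {u v : Fin n} {p : List (Fin n)}
    (h : IsSkelPath D u v p) : p.getD (p.length - 1) default = v := by
  have hpos := path_len_pos h
  have h1 := h.2.2.1
  rw [List.getLast?_eq_getElem?, List.getElem?_eq_getElem (by omega)] at h1
  rw [getD_in (by omega)]
  exact Option.some.inj h1

lemma path_adj {D : Fin n → Fin n → Prop} {u v : Fin n} {p : List (Fin n)}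
    (h : IsSkelPath D u v p) {i : ℕ} (hi : i + 1 < p.length) :
    D (p.getD i default) (p.getD (i+1) default) ∨
      D (p.getD (i+1) default) (p.getD i default) := by
  have := List.isChain_iff_getElem.mp h.2.2.2 i (by omega)
  rw [getD_in (by omega), getD_in hi]
  simpa [List.get_eq_getElem] using this

lemma path_inj {D : Fin n → Fin n → Prop} {u v : Fin n} {p : List (Fin n)}
    (h : IsSkelPath D u v p) {i j : ℕ} (hi : i < p.length) (hj : j < p.length)
    (hij : p.getD i default = p.getD j default) : i = j := by
  rw [getD_in hi, getD_in hj] at hij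
  have := List.nodup_iff_injective_get.mp h.1
    (a₁ := ⟨i, hi⟩) (a₂ := ⟨j, hj⟩) (by simpa [List.get_eq_getElem] using hij)
  simpa using congrArg Fin.val this

variable {D₁ D' : Fin n → Fin n → Prop}

lemma tgt2 (hD₁ : H₁ D₁) {a b : Fin n} (h : D₁ a b) : 2 ≤ b.1 := by
  rw [hD₁] at h; omega

lemma nbr (hD₁ : H₁ D₁) {a b : Fin n} (h : D₁ a b ∨ D₁ b a) (ha : a.1 ≤ 1) : b.1 = 2 := by
  rcases h with h | h <;> rw [hD₁] at h <;> omega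

lemma desc_two (hD₁ : H₁ D₁) (h2 : 2 < n) :
    ∀ k (hk : k < n), 2 ≤ k → Desc D₁ ⟨2, h2⟩ ⟨k, hk⟩ := by
  intro k
  induction k with
  | zero => intro _ h; exact absurd h (by omega)
  | succ m ih =>
    intro hk hm
    rcases Nat.lt_or_ge m 2 with h | h
    · have he : (⟨m+1, hk⟩ : Fin n) = ⟨2, h2⟩ := Fin.ext (by simp; omega)
      rw [he]
      exact Relation.ReflTransGen.refl
    · exact Relation.ReflTransGen.tail (ih (by omega) h)
        (by rw [hD₁]; right; right; exact ⟨h, rfl⟩)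

lemma desc_imp (hD₁ : H₁ D₁) (hD' : H' D₁ D') {x : Fin n} (hx : x.1 ≠ 0) :
    ∀ {w}, Desc D' x w → Desc D₁ x w ∧ w.1 ≠ 0 := by
  intro w h
  induction h with
  | refl => exact ⟨Relation.ReflTransGen.refl, hx⟩
  | tail hab hbc ih =>
    rcases (hD' _ _).1 hbc with h1 | h1
    · exact ⟨ih.1.tail h1, by have := tgt2 hD₁ h1; omega⟩
    · exact absurd h1.1 ih.2

lemma desc_mono (hD' : H' D₁ D') {x w : Fin n} (h : Desc D₁ x w) : Desc D' x w :=
  Relation.ReflTransGen.mono (fun a b hab => (hD' a b).2 (Or.inl hab)) _ _ h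

lemma internal_two (hD₁ : H₁ D₁) {u v : Fin n} {p : List (Fin n)}
    (h : IsSkelPath D₁ u v p) {i : ℕ} (h0 : 0 < i) (h1 : i + 1 < p.length) :
    2 ≤ (p.getD i default).1 := by
  by_contra hlt
  push_neg at hlt
  have hadj1 := path_adj h (i := i - 1) (by omega)
  rw [show i - 1 + 1 = i from by omega] at hadj1
  have hadj2 := path_adj h (i := i) h1
  have e1 : (p.getD (i-1) default).1 = 2 := nbr hD₁ hadj1.symm (by omega)
  have e2 : (p.getD (i+1) default).1 = 2 := nbr hD₁ hadj2 (by omega)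
  have : i - 1 = i + 1 := path_inj h (by omega) (by omega) (Fin.ext (by rw [e1, e2]))
  omega

lemma collider_iff (hD₁ : H₁ D₁) (hD' : H' D₁ D') {u v : Fin n} {p : List (Fin n)}
    (h : IsSkelPath D₁ u v p) {i : ℕ} (h0 : 0 < i) (h1 : i + 1 < p.length) :
    ColliderAt D' p i ↔ ColliderAt D₁ p i := by
  have h2 := internal_two hD₁ h h0 h1
  have key : ∀ x, D' x (p.getD i default) ↔ D₁ x (p.getD i default) := by
    intro x
    rw [hD']
    constructor
    · rintro (hh | hh)
      · exact hh
      · omega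
    · exact Or.inl
  unfold ColliderAt
  rw [key, key]

lemma blocked_iff (hD₁ : H₁ D₁) (hD' : H' D₁ D') {u v : Fin n} {Z : Finset (Fin n)}
    {p : List (Fin n)} (h : IsSkelPath D₁ u v p) :
    Blocked D₁ Z p ↔ Blocked D' Z p := by
  constructor <;> rintro ⟨i, h0, h1, hc⟩ <;> refine ⟨i, h0, h1, ?_⟩ <;>
    have hcoll := collider_iff hD₁ hD' h h0 h1 <;>
    have h2 := internal_two hD₁ h h0 h1
  · rcases hc with ⟨hnc, hm⟩ | ⟨hcl, hd⟩
    · exact Or.inl ⟨fun hc' => hnc (hcoll.mp hc'), hm⟩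
    · exact Or.inr ⟨hcoll.mpr hcl,
        fun w hw => hd w (desc_imp hD₁ hD' (by omega) hw).1⟩
  · rcases hc with ⟨hnc, hm⟩ | ⟨hcl, hd⟩
    · exact Or.inl ⟨fun hc' => hnc (hcoll.mpr hc'), hm⟩
    · exact Or.inr ⟨hcoll.mp hcl, fun w hw => hd w (desc_mono hD' hw)⟩

lemma skelPath_mono (hD' : H' D₁ D') {u v : Fin n} {p : List (Fin n)}
    (h : IsSkelPath D₁ u v p) : IsSkelPath D' u v p :=
  ⟨h.1, h.2.1, h.2.2.1, h.2.2.2.imp (fun a b hab =>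
    hab.imp (fun hh => (hD' a b).2 (Or.inl hh)) (fun hh => (hD' b a).2 (Or.inl hh)))⟩

lemma dsep_imp (hD₁ : H₁ D₁) (hD' : H' D₁ D') {u v : Fin n} {Z : Finset (Fin n)}
    (h : DSep D' u v Z) : DSep D₁ u v Z :=
  fun p hp => (blocked_iff hD₁ hD' hp).mpr (h p (skelPath_mono hD' hp))

lemma skelPath_reverse {D : Fin n → Fin n → Prop} {u v : Fin n} {p : List (Fin n)}
    (h : IsSkelPath D u v p) : IsSkelPath D v u p.reverse := by
  refine ⟨List.nodup_reverse.mpr h.1, ?_, ?_, ?_⟩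
  · rw [List.head?_reverse]; exact h.2.2.1
  · rw [List.getLast?_reverse]; exact h.2.1
  · exact List.isChain_reverse.mpr (h.2.2.2.imp (fun a b hab => hab.symm))

lemma rev_getD {p : List (Fin n)} {k : ℕ} (hk : k < p.length) :
    p.reverse.getD k default = p.getD (p.length - 1 - k) default := by
  rw [getD_in (by simpa using hk), getD_in (by omega)]
  exact List.getElem_reverse (by simpa using hk)

lemma blocked_reverse {D : Fin n → Fin n → Prop} {Z : Finset (Fin n)} {p : List (Fin n)}
    (h : Blocked D Z p.reverse) : Blocked D Z p := by
  obtain ⟨i, h0, h1, hc⟩ := h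
  rw [List.length_reverse] at h1
  refine ⟨p.length - 1 - i, by omega, by omega, ?_⟩
  have hcen := rev_getD (p := p) (k := i) (by omega)
  have hcoll : ColliderAt D p.reverse i ↔ ColliderAt D p (p.length - 1 - i) := by
    unfold ColliderAt
    rw [rev_getD (k := i - 1) (by omega), rev_getD (k := i + 1) (by omega), hcen,
      show p.length - 1 - (i-1) = (p.length - 1 - i) + 1 from by omega,
      show p.length - 1 - (i+1) = (p.length - 1 - i) - 1 from by omega]
    exact And.comm
  rcases hc with ⟨hnc, hm⟩ | ⟨hcl, hd⟩
  · exact Or.inl ⟨fun hc' => hnc (hcoll.mpr hc'), hcen ▸ hm⟩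
  · exact Or.inr ⟨hcoll.mp hcl, hcen ▸ hd⟩

lemma dsep_symm {D : Fin n → Fin n → Prop} {u v : Fin n} {Z : Finset (Fin n)}
    (h : DSep D u v Z) : DSep D v u Z :=
  fun p hp => blocked_reverse (h p.reverse (skelPath_reverse hp))

lemma dsep01 (hn : 4 ≤ n) (hD₁ : H₁ D₁) :
    DSep D₁ ⟨0, by linarith⟩ ⟨1, by linarith⟩ ∅ := by
  intro p hp
  have hpos := path_len_pos hp
  have h0 : p.getD 0 default = ⟨0, by omega⟩ := path_head hp
  have hlast : p.getD (p.length - 1) default = ⟨1, by omega⟩ := path_last hp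
  have hL2 : 2 ≤ p.length := by
    by_contra hh
    have hl1 : p.length - 1 = 0 := by omega
    rw [hl1, h0] at hlast
    exact absurd hlast (by simp [Fin.ext_iff])
  have hL3 : 3 ≤ p.length := by
    by_contra hh
    have hL : p.length = 2 := by omega
    have hadj := path_adj hp (i := 0) (by omega)
    rw [h0, show (0 : ℕ) + 1 = p.length - 1 from by omega, hlast] at hadj
    have := nbr hD₁ hadj (by simp)
    simp at this
  have h1 : (p.getD 1 default).1 = 2 := by
    have hadj := path_adj hp (i := 0) (by omega)
    rw [h0] at hadj
    exact nbr hD₁ hadj (by simp)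
  have hpre : (p.getD (p.length - 2) default).1 = 2 := by
    have hadj := path_adj hp (i := p.length - 2) (by omega)
    rw [show p.length - 2 + 1 = p.length - 1 from by omega, hlast] at hadj
    exact nbr hD₁ hadj.symm (by simp)
  have hLeq : p.length = 3 := by
    have := path_inj hp (i := 1) (j := p.length - 2) (by omega) (by omega)
      (Fin.ext (by rw [h1, hpre]))
    omega
  refine ⟨1, by omega, by omega, Or.inr ⟨⟨?_, ?_⟩, by simp⟩⟩
  · rw [hD₁, h0]
    exact Or.inl ⟨rfl, h1⟩
  · rw [hD₁, show (1 : ℕ) + 1 = p.length - 1 from by omega, hlast]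
    exact Or.inr (Or.inl ⟨rfl, h1⟩)

lemma not_dsep01_D' (hn : 4 ≤ n) (hD' : H' D₁ D') (Z : Finset (Fin n)) :
    ¬ DSep D' ⟨0, by linarith⟩ ⟨1, by linarith⟩ Z := by
  intro h
  have hp : IsSkelPath D' ⟨0, by omega⟩ ⟨1, by omega⟩ [⟨0, by omega⟩, ⟨1, by omega⟩] := by
    refine ⟨?_, rfl, rfl, ?_⟩
    · simp [Fin.ext_iff]
    · unfold List.Chain'
      rw [List.isChain_pair]
      exact Or.inl ((hD' _ _).2 (Or.inr ⟨rfl, rfl⟩))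
  obtain ⟨i, h0, h1, _⟩ := h _ hp
  simp at h1
  omega

lemma not_dsep01_D₁ (hn : 4 ≤ n) (hD₁ : H₁ D₁) {Z : Finset (Fin n)} (hZ : Z.Nonempty)
    (h0 : (⟨0, by linarith⟩ : Fin n) ∉ Z) (h1 : (⟨1, by linarith⟩ : Fin n) ∉ Z) :
    ¬ DSep D₁ ⟨0, by linarith⟩ ⟨1, by linarith⟩ Z := by
  intro h
  have hp : IsSkelPath D₁ ⟨0, by omega⟩ ⟨1, by omega⟩
      [⟨0, by omega⟩, ⟨2, by omega⟩, ⟨1, by omega⟩] := by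
    refine ⟨?_, rfl, rfl, ?_⟩
    · simp [Fin.ext_iff]
    · unfold List.Chain'
      rw [List.isChain_cons_cons, List.isChain_pair]
      exact ⟨Or.inl ((hD₁ _ _).2 (Or.inl ⟨rfl, rfl⟩)),
        Or.inr ((hD₁ _ _).2 (Or.inr (Or.inl ⟨rfl, rfl⟩)))⟩
  obtain ⟨i, hi0, hi1, hc⟩ := h _ hp
  simp only [List.length_cons, List.length_nil] at hi1
  have hieq : i = 1 := by omega
  subst hieq
  have hcol : ColliderAt D₁ [(⟨0, by omega⟩ : Fin n), ⟨2, by omega⟩, ⟨1, by omega⟩] 1 := by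
    constructor
    · exact (hD₁ _ _).2 (Or.inl ⟨rfl, rfl⟩)
    · exact (hD₁ _ _).2 (Or.inr (Or.inl ⟨rfl, rfl⟩))
  rcases hc with ⟨hnc, _⟩ | ⟨_, hd⟩
  · exact hnc hcol
  · obtain ⟨z, hz⟩ := hZ
    have hz2 : 2 ≤ z.1 := by
      rcases Nat.lt_or_ge z.1 2 with hlt | hge
      · exfalso
        rcases Nat.lt_or_ge z.1 1 with hz0 | hz1
        · apply h0
          have hze : z = ⟨0, by omega⟩ := Fin.ext ((by omega : z.1 = 0))
          rwa [hze] at hz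
        · apply h1
          have hze : z = ⟨1, by omega⟩ := Fin.ext ((by omega : z.1 = 1))
          rwa [hze] at hz
      · exact hge
    have hdesc : Desc D₁ (⟨2, by omega⟩ : Fin n) z := by
      have := desc_two hD₁ (by omega) z.1 z.2 hz2
      simpa using this
    exact hd z hdesc hz

lemma adj_cases (hD₁ : H₁ D₁) (hD' : H' D₁ D') {a b : Fin n}
    (h : D' a b ∨ D' b a) : (D₁ a b ∨ D₁ b a) ∨ Spec a b := by
  rcases h with h | h <;> rw [hD'] at h
  · rcases h with h | h
    · exact Or.inl (Or.inl h)
    · exact Or.inr (Or.inl h)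
  · rcases h with h | h
    · exact Or.inl (Or.inr h)
    · exact Or.inr (Or.inr ⟨h.2, h.1⟩)

lemma start_case (hn : 4 ≤ n) (hD₁ : H₁ D₁) (hD' : H' D₁ D') {u v : Fin n}
    {Z : Finset (Fin n)} (hd : DSep D₁ u v Z) (hexc : ¬ Spec u v) {p : List (Fin n)}
    (hp : IsSkelPath D' u v p) (hlen : 1 < p.length)
    (hsp : Spec (p.getD 0 default) (p.getD 1 default)) :
    Blocked D' Z p := by
  rcases p with _ | ⟨a, _ | ⟨b, t⟩⟩
  · simp at hlen
  · simp at hlen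
  have hau : a = u := by
    have := hp.2.1; simpa using this
  subst hau
  simp only [List.getD_cons_zero, List.getD_cons_succ] at hsp
  rcases t with _ | ⟨c, t'⟩
  · exfalso
    have hbv : b = v := by have := hp.2.2.1; simpa using this
    exact hexc (hbv ▸ hsp)
  have hnd := hp.1
  have hchain := hp.2.2.2
  unfold List.Chain' at hchain
  rw [List.isChain_cons_cons] at hchain
  obtain ⟨hab, hchain2⟩ := hchain
  rw [List.isChain_cons_cons] at hchain2
  obtain ⟨hbc, hct⟩ := hchain2
  have hvals : a.1 ≤ 1 ∧ b.1 ≤ 1 ∧ a.1 ≠ b.1 := by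
    rcases hsp with ⟨h1, h2⟩ | ⟨h1, h2⟩ <;> omega
  have hmem : ∀ x ∈ c :: t', 2 ≤ x.1 := by
    intro x hx
    by_contra hh
    push_neg at hh
    have hxab : x = a ∨ x = b := by
      rcases Nat.lt_or_ge x.1 1 with h1 | h1
      · rcases Nat.lt_or_ge a.1 1 with h2 | h2
        · exact Or.inl (Fin.ext (by omega))
        · exact Or.inr (Fin.ext (by omega))
      · rcases Nat.lt_or_ge a.1 1 with h2 | h2
        · exact Or.inr (Fin.ext (by omega))
        · exact Or.inl (Fin.ext (by omega))
    simp only [List.nodup_cons] at hnd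
    rcases hxab with rfl | rfl
    · exact hnd.1 (List.mem_cons_of_mem _ hx)
    · exact hnd.2.1 hx
  have hc2 : c.1 = 2 := by
    rcases adj_cases hD₁ hD' hbc with hh | hh
    · exact nbr hD₁ hh (by omega)
    · exfalso
      have := hmem c List.mem_cons_self
      rcases hh with ⟨h1, h2⟩ | ⟨h1, h2⟩ <;> omega
  have chain₁ : List.Chain' (fun x y => D₁ x y ∨ D₁ y x) (c :: t') := by
    unfold List.Chain'
    rw [List.isChain_iff_getElem] at hct ⊢
    intro i hi
    rcases adj_cases hD₁ hD' (hct i hi) with hh | hh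
    · exact hh
    · exfalso
      have hm1 : 2 ≤ ((c :: t').get ⟨i, by omega⟩).1 := hmem _ (List.get_mem _ _)
      have hm2 : 2 ≤ ((c :: t').get ⟨i + 1, by omega⟩).1 := hmem _ (List.get_mem _ _)
      simp only [List.get_eq_getElem] at hm1 hm2
      rcases hh with ⟨h1, h2⟩ | ⟨h1, h2⟩ <;> omega
  have hq : IsSkelPath D₁ a v (a :: c :: t') := by
    refine ⟨?_, rfl, ?_, ?_⟩
    · exact hnd.sublist ((List.sublist_cons_self b (c :: t')).cons₂ a)
    · have hgl := hp.2.2.1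
      simp only [List.getLast?_cons_cons] at hgl ⊢
      exact hgl
    · unfold List.Chain'
      rw [List.isChain_cons_cons]
      refine ⟨Or.inl ?_, chain₁⟩
      rw [hD₁]
      omega
  have hbq : Blocked D' Z (a :: c :: t') := (blocked_iff hD₁ hD' hq).mp (hd _ hq)
  obtain ⟨i, hi0, hi1, hc⟩ := hbq
  obtain ⟨k, rfl⟩ : ∃ k, i = k + 1 := ⟨i - 1, by omega⟩
  simp only [List.length_cons] at hi1
  have hcen : (a :: c :: t').getD (k+1) default = (a :: b :: c :: t').getD (k+2) default := by
    simp [List.getD_cons_succ]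
  have hrt : (a :: c :: t').getD (k+2) default = (a :: b :: c :: t').getD (k+3) default := by
    simp [List.getD_cons_succ]
  have hcol : ColliderAt D' (a :: c :: t') (k+1) ↔ ColliderAt D' (a :: b :: c :: t') (k+2) := by
    unfold ColliderAt
    rw [show k + 1 - 1 = k from rfl, show k + 2 - 1 = k + 1 from rfl]
    rw [hcen, hrt]
    cases k with
    | zero =>
      simp only [List.getD_cons_zero, List.getD_cons_succ]
      have hu : D' a c := (hD' _ _).2 (Or.inl (by rw [hD₁]; omega))
      have hb : D' b c := (hD' _ _).2 (Or.inl (by rw [hD₁]; omega))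
      constructor
      · rintro ⟨-, h2⟩; exact ⟨hb, h2⟩
      · rintro ⟨-, h2⟩; exact ⟨hu, h2⟩
    | succ m =>
      simp only [List.getD_cons_succ]
  refine ⟨k + 2, by omega, by simp only [List.length_cons]; omega, ?_⟩
  rcases hc with ⟨hnc, hm⟩ | ⟨hcl, hdz⟩
  · exact Or.inl ⟨fun hc' => hnc (hcol.mpr hc'), hcen ▸ hm⟩
  · exact Or.inr ⟨hcol.mp hcl, hcen ▸ hdz⟩

lemma main_forward (hn : 4 ≤ n) (hD₁ : H₁ D₁) (hD' : H' D₁ D') {u v : Fin n}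
    {Z : Finset (Fin n)} (hexc : ¬ Spec u v) (h : DSep D₁ u v Z) :
    DSep D' u v Z := by
  intro p hp
  by_cases hall : ∀ i, i + 1 < p.length →
      (D₁ (p.getD i default) (p.getD (i+1) default) ∨
        D₁ (p.getD (i+1) default) (p.getD i default))
  · have hp1 : IsSkelPath D₁ u v p := by
      refine ⟨hp.1, hp.2.1, hp.2.2.1, ?_⟩
      unfold List.Chain'
      rw [List.isChain_iff_getElem]
      intro i hi
      have := hall i (by omega)
      rw [getD_in (by omega), getD_in (by omega)] at this
      simpa [List.get_eq_getElem] using this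
    exact (blocked_iff hD₁ hD' hp1).mp (h p hp1)
  · push_neg at hall
    obtain ⟨j, hj, hnadj⟩ := hall
    have hsp : Spec (p.getD j default) (p.getD (j+1) default) :=
      (adj_cases hD₁ hD' (path_adj hp hj)).resolve_left (not_or.mpr hnadj)
    by_cases hj0 : j = 0
    · subst hj0
      exact start_case hn hD₁ hD' h hexc hp (by omega) hsp
    · by_cases hjL : j = p.length - 2
      · have hrev := skelPath_reverse hp
        have hspr : Spec (p.reverse.getD 0 default) (p.reverse.getD 1 default) := by
          rw [rev_getD (by omega), rev_getD (by omega)]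
          rw [show p.length - 1 - 0 = j + 1 from by omega,
              show p.length - 1 - 1 = j from by omega]
          rcases hsp with ⟨h1, h2⟩ | ⟨h1, h2⟩
          · exact Or.inr ⟨h2, h1⟩
          · exact Or.inl ⟨h2, h1⟩
        have hexc' : ¬ Spec v u := by
          intro hs; apply hexc
          rcases hs with ⟨h1, h2⟩ | ⟨h1, h2⟩
          · exact Or.inr ⟨h2, h1⟩
          · exact Or.inl ⟨h2, h1⟩
        exact blocked_reverse (start_case hn hD₁ hD' (dsep_symm h) hexc' hrev
          (by rw [List.length_reverse]; omega) hspr)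
      · exfalso
        have h0j : 0 < j := Nat.pos_of_ne_zero hj0
        have hj2 : j + 2 < p.length := by omega
        have hsp1 : (p.getD j default).1 ≤ 1 ∧ (p.getD (j+1) default).1 ≤ 1 ∧
            (p.getD j default).1 + (p.getD (j+1) default).1 = 1 := by
          rcases hsp with ⟨h1, h2⟩ | ⟨h1, h2⟩ <;> omega
        have hadjl := path_adj hp (i := j - 1) (by omega)
        rw [show j - 1 + 1 = j from by omega] at hadjl
        have hl2 : (p.getD (j-1) default).1 = 2 := by
          rcases adj_cases hD₁ hD' hadjl with hh | hh
          · exact nbr hD₁ hh.symm (by omega)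
          · exfalso
            have heq : p.getD (j-1) default = p.getD (j+1) default := by
              apply Fin.ext
              rcases hh with ⟨h1, h2⟩ | ⟨h1, h2⟩ <;> omega
            have := path_inj hp (by omega) (by omega) heq
            omega
        have hadjr : D' (p.getD (j+1) default) (p.getD (j+2) default) ∨
            D' (p.getD (j+2) default) (p.getD (j+1) default) :=
          path_adj hp (i := j + 1) (by omega)
        have hr2 : (p.getD (j+2) default).1 = 2 := by
          rcases adj_cases hD₁ hD' hadjr with hh | hh
          · exact nbr hD₁ hh (by omega)
          · exfalso
            have heq : p.getD (j+2) default = p.getD j default := by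
              apply Fin.ext
              rcases hh with ⟨h1, h2⟩ | ⟨h1, h2⟩ <;> omega
            have := path_inj hp (by omega) (by omega) heq
            omega
        have := path_inj hp (i := j - 1) (j := j + 2) (by omega) (by omega)
          (Fin.ext (by rw [hl2, hr2]))
        omega

end DSepProof

theorem one_error_indistinguishable_dags {n : ℕ} [NeZero n] (hn : 4 ≤ n)
    (D₁ D' : Fin n → Fin n → Prop)
    (hD₁ : ∀ a b : Fin n, D₁ a b ↔
      ((a.1 = 0 ∧ b.1 = 2) ∨ (a.1 = 1 ∧ b.1 = 2) ∨ (2 ≤ a.1 ∧ a.1 + 1 = b.1)))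
    (hD' : ∀ a b : Fin n, D' a b ↔ (D₁ a b ∨ (a.1 = 0 ∧ b.1 = 1))) :
    dSepDist D₁ D' = 1 ∧
    DSep D₁ ⟨0, by omega⟩ ⟨1, by omega⟩ ∅ ∧
    ¬ DSep D' ⟨0, by omega⟩ ⟨1, by omega⟩ ∅ ∧
    ∀ (u v : Fin n) (Z : Finset (Fin n)), u ≠ v → u ∉ Z → v ∉ Z →
      (¬ (DSep D₁ u v Z ↔ DSep D' u v Z) ↔
        (({u, v} : Finset (Fin n)) = {⟨0, by omega⟩, ⟨1, by omega⟩} ∧ Z = ∅)) := by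
  have hH₁ : DSepProof.H₁ D₁ := hD₁
  have hH' : DSepProof.H' D₁ D' := hD'
  have T2 : DSep D₁ ⟨0, by omega⟩ ⟨1, by omega⟩ ∅ := DSepProof.dsep01 hn hH₁
  have T3 : ∀ Z : Finset (Fin n), ¬ DSep D' ⟨0, by omega⟩ ⟨1, by omega⟩ Z :=
    fun Z => DSepProof.not_dsep01_D' hn hH' Z
  have pairdec : ∀ u v : Fin n,
      ({u, v} : Finset (Fin n)) = {⟨0, by omega⟩, ⟨1, by omega⟩} →
      (u = ⟨0, by omega⟩ ∧ v = ⟨1, by omega⟩) ∨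
        (u = ⟨1, by omega⟩ ∧ v = ⟨0, by omega⟩) := by
    intro u v hpair
    have hc := congrArg (fun s : Finset (Fin n) => (s : Set (Fin n))) hpair
    simp only [Finset.coe_insert, Finset.coe_singleton] at hc
    exact Set.pair_eq_pair_iff.mp hc
  have T4 : ∀ (u v : Fin n) (Z : Finset (Fin n)), u ≠ v → u ∉ Z → v ∉ Z →
      (¬ (DSep D₁ u v Z ↔ DSep D' u v Z) ↔
        (({u, v} : Finset (Fin n)) = {⟨0, by omega⟩, ⟨1, by omega⟩} ∧ Z = ∅)) := by
    intro u v Z huv hu hv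
    constructor
    · intro hni
      by_cases hs : DSepProof.Spec u v
      · have hor : (u = ⟨0, by omega⟩ ∧ v = ⟨1, by omega⟩) ∨
            (u = ⟨1, by omega⟩ ∧ v = ⟨0, by omega⟩) := by
          rcases hs with ⟨h1, h2⟩ | ⟨h1, h2⟩
          · exact Or.inl ⟨Fin.ext h1, Fin.ext h2⟩
          · exact Or.inr ⟨Fin.ext h1, Fin.ext h2⟩
        have hpair : ({u, v} : Finset (Fin n)) = {⟨0, by omega⟩, ⟨1, by omega⟩} := by
          rcases hor with ⟨rfl, rfl⟩ | ⟨rfl, rfl⟩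
          · rfl
          · exact Finset.pair_comm _ _
        refine ⟨hpair, ?_⟩
        by_contra hZ
        apply hni
        have hZne : Z.Nonempty := Finset.nonempty_iff_ne_empty.mpr hZ
        rcases hor with ⟨rfl, rfl⟩ | ⟨rfl, rfl⟩
        · exact iff_of_false (DSepProof.not_dsep01_D₁ hn hH₁ hZne hu hv)
            (fun hd' => DSepProof.not_dsep01_D₁ hn hH₁ hZne hu hv
              (DSepProof.dsep_imp hH₁ hH' hd'))
        · refine iff_of_false ?_ ?_
          · intro hd
            exact DSepProof.not_dsep01_D₁ hn hH₁ hZne hv hu (DSepProof.dsep_symm hd)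
          · intro hd
            exact DSepProof.not_dsep01_D₁ hn hH₁ hZne hv hu
              (DSepProof.dsep_symm (DSepProof.dsep_imp hH₁ hH' hd))
      · exact absurd ⟨fun hd => DSepProof.main_forward hn hH₁ hH' hs hd,
          fun hd => DSepProof.dsep_imp hH₁ hH' hd⟩ hni
    · rintro ⟨hpair, rfl⟩
      intro hiff
      rcases pairdec u v hpair with ⟨rfl, rfl⟩ | ⟨rfl, rfl⟩
      · exact T3 ∅ (hiff.mp T2)
      · exact T3 ∅ (DSepProof.dsep_symm (hiff.mp (DSepProof.dsep_symm T2)))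
  have hsingle : {t : Fin n × Fin n × Finset (Fin n) |
      t.1 < t.2.1 ∧ t.1 ∉ t.2.2 ∧ t.2.1 ∉ t.2.2 ∧
      ¬ (DSep D₁ t.1 t.2.1 t.2.2 ↔ DSep D' t.1 t.2.1 t.2.2)} =
      {((⟨0, by omega⟩ : Fin n), (⟨1, by omega⟩ : Fin n), (∅ : Finset (Fin n)))} := by
    ext ⟨u, v, Z⟩
    simp only [Set.mem_setOf_eq, Set.mem_singleton_iff, Prod.mk.injEq]
    constructor
    · rintro ⟨hlt, hu, hv, hni⟩
      obtain ⟨hpair, hZ⟩ := (T4 u v Z (ne_of_lt hlt) hu hv).mp hni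
      rcases pairdec u v hpair with ⟨rfl, rfl⟩ | ⟨rfl, rfl⟩
      · exact ⟨rfl, rfl, hZ⟩
      · exact absurd hlt (by simp [Fin.lt_def])
    · rintro ⟨rfl, rfl, rfl⟩
      refine ⟨by simp [Fin.lt_def], Finset.notMem_empty _, Finset.notMem_empty _, ?_⟩
      intro hiff
      exact T3 ∅ (hiff.mp T2)
  refine ⟨?_, T2, T3 ∅, T4⟩
  unfold dSepDist
  rw [hsingle]
  exact Set.ncard_singleton _
end

section
/- Let r ≥ 2 divide n, and let D be a DAG on n vertices that is a disjoint union of r complete DAGs (acyclic tournaments) each on n/r vertices. If u and v lie in the same clique, the number of sets Z ⊆ V \ {u, v} that d-separate u and v in D is at most 2^(n-2) - 2^(n - n/r); equivalently, if a DAG D''' is missing an arc between two vertices u, v of the same clique of D, then u and v are d-separated in D''' by at least 2^(n - n/r) sets Z of the form S ∪ W where S is some fixed subset of the clique's vertices d-separating u and v in D''' and W ranges over subsets of vertices outside the clique. -/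
-- ## helper lemmas

def pget {n : ℕ} [NeZero n] (p : List (Fin n)) (i : ℕ) : Fin n := p.getD i default

lemma pget_congr {n : ℕ} [NeZero n] (p : List (Fin n)) {i j : ℕ} (h : i = j) :
    pget p i = pget p j := by rw [h]

lemma colliderAt_def {n : ℕ} [NeZero n] (D : Fin n → Fin n → Prop) (p : List (Fin n)) (i : ℕ) :
    ColliderAt D p i ↔ D (pget p (i - 1)) (pget p i) ∧ D (pget p (i + 1)) (pget p i) := Iff.rfl

lemma blocked_def {n : ℕ} [NeZero n] (D : Fin n → Fin n → Prop) (Z : Finset (Fin n))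
    (p : List (Fin n)) : Blocked D Z p ↔
    ∃ i : ℕ, 0 < i ∧ i + 1 < p.length ∧
      ((¬ ColliderAt D p i ∧ pget p i ∈ Z) ∨
        (ColliderAt D p i ∧ ∀ w, Desc D (pget p i) w → w ∉ Z)) := Iff.rfl

lemma skel_facts {n : ℕ} [NeZero n] {D : Fin n → Fin n → Prop} {u v : Fin n}
    {p : List (Fin n)} (hp : IsSkelPath D u v p) (huv : u ≠ v) :
    pget p 0 = u ∧ pget p (p.length - 1) = v ∧
    (∀ i, i + 1 < p.length → D (pget p i) (pget p (i+1)) ∨ D (pget p (i+1)) (pget p i)) ∧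
    (∀ i j, i < p.length → j < p.length → pget p i = pget p j → i = j) ∧
    2 ≤ p.length := by
  obtain ⟨hnd, hh, hl, hch⟩ := hp
  rw [List.head?_eq_getElem?] at hh
  rw [List.getLast?_eq_getElem?] at hl
  obtain ⟨h0lt, h0⟩ := List.getElem?_eq_some_iff.mp hh
  obtain ⟨hllt, hlv⟩ := List.getElem?_eq_some_iff.mp hl
  have h0' : pget p 0 = u := by rw [pget, List.getD_eq_getElem _ _ h0lt]; exact h0
  have hl' : pget p (p.length - 1) = v := by
    rw [pget, List.getD_eq_getElem _ _ hllt]; exact hlv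
  have hedge : ∀ i, i + 1 < p.length →
      D (pget p i) (pget p (i+1)) ∨ D (pget p (i+1)) (pget p i) := by
    intro i hi
    have h1 : i < p.length := by omega
    have := List.isChain_iff_getElem.mp hch i (by omega)
    rw [pget, pget, List.getD_eq_getElem _ _ h1, List.getD_eq_getElem _ _ hi]
    simpa [List.get_eq_getElem] using this
  have hinj : ∀ i j, i < p.length → j < p.length → pget p i = pget p j → i = j := by
    intro i j hi hj he
    rw [pget, pget, List.getD_eq_getElem _ _ hi, List.getD_eq_getElem _ _ hj] at he
    have := List.nodup_iff_injective_get.mp hnd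
      (a₁ := ⟨i, hi⟩) (a₂ := ⟨j, hj⟩) (by simpa [List.get_eq_getElem] using he)
    exact congrArg Fin.val this
  have hL2 : 2 ≤ p.length := by
    by_contra h
    have h1 : p.length = 1 := by omega
    apply huv
    rw [← h0', ← hl', h1]
  exact ⟨h0', hl', hedge, hinj, hL2⟩

lemma desc_key {n : ℕ} {D : Fin n → Fin n → Prop} (key : Fin n → ℕ)
    (hkey : ∀ a b, D a b → key a = key b) {x y : Fin n} (h : Desc D x y) :
    key x = key y := by
  induction h with
  | refl => rfl
  | tail _ h2 ih => exact ih.trans (hkey _ _ h2)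

lemma transGen_key {n : ℕ} {D : Fin n → Fin n → Prop} (key : Fin n → ℕ)
    (hkey : ∀ a b, D a b → key a = key b) {x y : Fin n} (h : Relation.TransGen D x y) :
    key x = key y :=
  desc_key key hkey h.to_reflTransGen

lemma blocked_anc {n : ℕ} [NeZero n] {D : Fin n → Fin n → Prop} (hD : IsDAG D)
    {u v : Fin n} (huv : u ≠ v) (hnuv : ¬ D u v) (hnvu : ¬ D v u)
    {Z : Finset (Fin n)}
    (hZ : ∀ x, x ∈ Z ↔ x ≠ u ∧ x ≠ v ∧
      (Relation.TransGen D x u ∨ Relation.TransGen D x v))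
    {p : List (Fin n)} (hp : IsSkelPath D u v p) : Blocked D Z p := by
  obtain ⟨h0, hlast, hedge, hinj, hL2⟩ := skel_facts hp huv
  set L := p.length with hLdef
  have h2cyc : ∀ a b : Fin n, D a b → D b a → False := fun a b h1 h2 =>
    hD a (Relation.TransGen.head h1 (Relation.TransGen.single h2))
  have hL3 : 3 ≤ L := by
    by_contra h
    have hL : L = 2 := by omega
    have he := hedge 0 (by omega)
    rw [h0, show (0:ℕ) + 1 = L - 1 by omega, hlast] at he
    exact he.elim hnuv hnvu
  rw [blocked_def]
  by_contra hnb
  have hnc : ∀ i, 0 < i → i + 1 < L → ¬ ColliderAt D p i → pget p i ∈ Z → False :=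
    fun i hi hi1 hncol hmem => hnb ⟨i, hi, hi1, Or.inl ⟨hncol, hmem⟩⟩
  have hcol : ∀ i, 0 < i → i + 1 < L → ColliderAt D p i →
      Relation.TransGen D (pget p i) u ∨ Relation.TransGen D (pget p i) v := by
    intro i hi hi1 hc
    have hne : ¬ ∀ w, Desc D (pget p i) w → w ∉ Z := fun hall =>
      hnb ⟨i, hi, hi1, Or.inr ⟨hc, hall⟩⟩
    push_neg at hne
    obtain ⟨w, hdw, hwZ⟩ := hne
    obtain ⟨-, -, hw⟩ := (hZ w).mp hwZ
    exact hw.imp (Relation.TransGen.trans_right hdw) (Relation.TransGen.trans_right hdw)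
  have hmemZ : ∀ i, 0 < i → i + 1 < L →
      (Relation.TransGen D (pget p i) u ∨ Relation.TransGen D (pget p i) v) → pget p i ∈ Z := by
    intro i hi hi1 h
    rw [hZ]
    refine ⟨fun he => ?_, fun he => ?_, h⟩
    · have := hinj i 0 (by omega) (by omega) (by rw [he, h0])
      omega
    · have := hinj i (L - 1) (by omega) (by omega) (by rw [he, hlast])
      omega
  -- rightward lemma
  have right : ∀ d i, 0 < i → i + 1 < L → i + 1 + d = L → D (pget p i) (pget p (i+1)) →
      Relation.TransGen D (pget p i) u ∨ Relation.TransGen D (pget p i) v := by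
    intro d
    induction d with
    | zero => intro i _ hi1 hiL _; omega
    | succ d ih =>
      intro i hi hi1 hiL he
      by_cases hl : i + 1 = L - 1
      · right
        rw [pget_congr p hl, hlast] at he
        exact Relation.TransGen.single he
      · have hi2 : i + 2 < L := by omega
        have he' := hedge (i+1) (by omega)
        rw [show i + 1 + 1 = i + 2 by omega] at he'
        rcases he' with h1 | h1
        · have := ih (i+1) (by omega) (by omega) (by omega)
            (by rw [show i + 1 + 1 = i + 2 by omega]; exact h1)
          exact this.imp (Relation.TransGen.head he) (Relation.TransGen.head he)
        · have hc : ColliderAt D p (i+1) := by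
            rw [colliderAt_def, pget_congr p (show i + 1 - 1 = i by omega),
              pget_congr p (show i + 1 + 1 = i + 2 by omega)]
            exact ⟨he, h1⟩
          have := hcol (i+1) (by omega) hi2 hc
          exact this.imp (Relation.TransGen.head he) (Relation.TransGen.head he)
  -- leftward lemma
  have left : ∀ i, 0 < i → i + 1 < L → D (pget p i) (pget p (i-1)) →
      Relation.TransGen D (pget p i) u ∨ Relation.TransGen D (pget p i) v := by
    intro i
    induction i using Nat.strong_induction_on with
    | _ i ih =>
      intro hi hi1 he
      by_cases h1 : i = 1
      · left
        subst h1
        rw [pget_congr p (show (1:ℕ) - 1 = 0 by omega), h0] at he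
        exact Relation.TransGen.single he
      · have hi2 : 2 ≤ i := by omega
        have he' := hedge (i-2) (by omega)
        rw [pget_congr p (show i - 2 + 1 = i - 1 by omega)] at he'
        rcases he' with hh1 | hh1
        · have hc : ColliderAt D p (i-1) := by
            rw [colliderAt_def, pget_congr p (show i - 1 - 1 = i - 2 by omega),
              pget_congr p (show i - 1 + 1 = i by omega)]
            exact ⟨hh1, he⟩
          have := hcol (i-1) (by omega) (by omega) hc
          exact this.imp (Relation.TransGen.head he) (Relation.TransGen.head he)
        · have := ih (i-1) (by omega) (by omega) (by omega)
            (by rw [pget_congr p (show i - 1 - 1 = i - 2 by omega)]; exact hh1)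
          exact this.imp (Relation.TransGen.head he) (Relation.TransGen.head he)
  -- main argument
  have hD1 : D u (pget p 1) := by
    have he := hedge 0 (by omega)
    rw [h0, show (0:ℕ) + 1 = 1 by omega] at he
    rcases he with h | h
    · exact h
    · exfalso
      have hl1 := left 1 one_pos (by omega)
        (by rw [pget_congr p (show (1:ℕ) - 1 = 0 by omega), h0]; exact h)
      have hncol : ¬ ColliderAt D p 1 := by
        rw [colliderAt_def, pget_congr p (show (1:ℕ) - 1 = 0 by omega), h0]
        rintro ⟨hc1, -⟩
        exact h2cyc _ _ hc1 h
      exact hnc 1 one_pos (by omega) hncol (hmemZ 1 one_pos (by omega) hl1)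
  by_cases hc1 : ColliderAt D p 1
  · have hc1b : D (pget p 2) (pget p 1) := by
      have := ((colliderAt_def D p 1).mp hc1).2
      rwa [pget_congr p (show (1:ℕ) + 1 = 2 by omega)] at this
    rcases hcol 1 one_pos (by omega) hc1 with h | h
    · exact hD u (Relation.TransGen.head hD1 h)
    · by_cases h3 : 2 = L - 1
      · rw [pget_congr p h3, hlast] at hc1b
        exact hD v (Relation.TransGen.head hc1b h)
      · have h2i : 2 + 1 < L := by omega
        have hl2 := left 2 (by omega) h2i
          (by rw [pget_congr p (show (2:ℕ) - 1 = 1 by omega)]; exact hc1b)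
        have hncol2 : ¬ ColliderAt D p 2 := by
          rw [colliderAt_def, pget_congr p (show (2:ℕ) - 1 = 1 by omega)]
          rintro ⟨hca, -⟩
          exact h2cyc _ _ hca hc1b
        exact hnc 2 (by omega) h2i hncol2 (hmemZ 2 (by omega) h2i hl2)
  · have he12 : D (pget p 1) (pget p 2) := by
      have he := hedge 1 (by omega)
      rw [show (1:ℕ) + 1 = 2 by omega] at he
      rcases he with h | h
      · exact h
      · exfalso
        apply hc1
        rw [colliderAt_def, pget_congr p (show (1:ℕ) - 1 = 0 by omega), h0,
          pget_congr p (show (1:ℕ) + 1 = 2 by omega)]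
        exact ⟨hD1, h⟩
    have := right (L - 2) 1 one_pos (by omega) (by omega) he12
    exact hnc 1 one_pos (by omega) hc1 (hmemZ 1 one_pos (by omega) this)

lemma path_key {n : ℕ} [NeZero n] {D : Fin n → Fin n → Prop} {u v : Fin n} (huv : u ≠ v)
    (key : Fin n → ℕ) (hkey : ∀ a b, D a b → key a = key b)
    {p : List (Fin n)} (hp : IsSkelPath D u v p) :
    ∀ i, i < p.length → key (pget p i) = key u := by
  obtain ⟨h0, hlast, hedge, hinj, hL2⟩ := skel_facts hp huv
  intro i
  induction i with
  | zero => intro _; rw [h0]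
  | succ j ih =>
    intro h
    have hj := ih (by omega)
    rcases hedge j h with h1 | h1
    · rw [← hkey _ _ h1]; exact hj
    · rw [hkey _ _ h1]; exact hj

lemma dsep_union {n : ℕ} [NeZero n] {D : Fin n → Fin n → Prop} {u v : Fin n} (huv : u ≠ v)
    (key : Fin n → ℕ) (hkey : ∀ a b, D a b → key a = key b)
    {S W : Finset (Fin n)} (hS : ∀ x ∈ S, key x = key u) (hW : ∀ x ∈ W, key x ≠ key u)
    (h : DSep D u v S) : DSep D u v (S ∪ W) := by
  intro p hp
  have hk := path_key huv key hkey hp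
  obtain ⟨i, hi, hi1, hb⟩ := (blocked_def D S p).mp (h p hp)
  rw [blocked_def]
  refine ⟨i, hi, hi1, ?_⟩
  rcases hb with ⟨hnc, hmem⟩ | ⟨hc, hall⟩
  · exact Or.inl ⟨hnc, Finset.mem_union_left _ hmem⟩
  · refine Or.inr ⟨hc, fun w hdw hwm => ?_⟩
    rcases Finset.mem_union.mp hwm with h' | h'
    · exact hall w hdw h'
    · have h1 : key (pget p i) = key w := desc_key key hkey hdw
      have h2 : key (pget p i) = key u := hk i (by omega)
      exact hW w h' (h1 ▸ h2)

lemma card_clique {n m r q : ℕ} [NeZero n] (hm : 0 < m) (hmr : m * r = n) (hq : q < r) :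
    (Finset.univ.filter (fun x : Fin n => x.1 / m = q)).card = m := by
  classical
  have hbound : ∀ i : Fin m, q * m + i.1 < n := by
    intro i
    have h1 : q * m + i.1 < (q + 1) * m := by
      have := i.isLt; nlinarith
    have h2 : (q + 1) * m ≤ r * m := Nat.mul_le_mul_right m hq
    have h3 : r * m = n := by rw [Nat.mul_comm]; exact hmr
    omega
  have himg : Finset.univ.filter (fun x : Fin n => x.1 / m = q) =
      Finset.univ.image (fun i : Fin m => (⟨q * m + i.1, hbound i⟩ : Fin n)) := by
    ext x
    simp only [Finset.mem_filter, Finset.mem_image, Finset.mem_univ, true_and]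
    constructor
    · intro hx
      refine ⟨⟨x.1 % m, Nat.mod_lt _ hm⟩, ?_⟩
      apply Fin.ext
      simp only
      conv_rhs => rw [← Nat.div_add_mod x.1 m]
      rw [hx, Nat.mul_comm]
    · rintro ⟨i, rfl⟩
      simp only
      rw [Nat.add_comm, Nat.mul_comm, Nat.add_mul_div_left _ _ hm, Nat.div_eq_of_lt i.isLt, Nat.zero_add]
  rw [himg, Finset.card_image_of_injective _ (fun a b hab => by
      apply Fin.ext
      have := congrArg Fin.val hab
      simp only at this
      omega),
    Finset.card_univ, Fintype.card_fin]

theorem clique_union_dseparation_counts {n r : ℕ} [NeZero n] (hr : 2 ≤ r) (hdvd : r ∣ n)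
    (D : Fin n → Fin n → Prop) (hD : IsDAG D)
    (hcl : ∀ a b : Fin n, a ≠ b → (a.1 / (n / r) = b.1 / (n / r) ↔ (D a b ∨ D b a)))
    (u v : Fin n) (huv : u ≠ v) (hsame : u.1 / (n / r) = v.1 / (n / r)) :
    Set.ncard {Z : Finset (Fin n) | u ∉ Z ∧ v ∉ Z ∧ DSep D u v Z} ≤
      2 ^ (n - 2) - 2 ^ (n - n / r) ∧
    ∀ D''' : Fin n → Fin n → Prop, IsDAG D''' → (∀ a b, D''' a b → D a b) →
      ¬ D''' u v → ¬ D''' v u →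
      (∃ S : Finset (Fin n), (∀ x ∈ S, x.1 / (n / r) = u.1 / (n / r)) ∧
        u ∉ S ∧ v ∉ S ∧ DSep D''' u v S ∧
        ∀ W : Finset (Fin n), (∀ x ∈ W, x.1 / (n / r) ≠ u.1 / (n / r)) →
          DSep D''' u v (S ∪ W)) ∧
      2 ^ (n - n / r) ≤
        Set.ncard {Z : Finset (Fin n) | u ∉ Z ∧ v ∉ Z ∧ DSep D''' u v Z} := by
  classical
  set m := n / r with hmdef
  have hn0 : 0 < n := Nat.pos_of_ne_zero (NeZero.ne n)
  have hmn : m * r = n := Nat.div_mul_cancel hdvd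
  have hmn' : r * m = n := by rw [Nat.mul_comm]; exact hmn
  have hm0 : 0 < m := by
    rw [hmdef]
    exact Nat.div_pos (Nat.le_of_dvd hn0 hdvd) (by omega)
  have hq : u.1 / m < r := by
    rw [Nat.div_lt_iff_lt_mul hm0]
    have := u.isLt
    omega
  constructor
  · -- first part : the set is empty
    have hadj := (hcl u v huv).mp hsame
    have hpath : IsSkelPath D u v [u, v] := by
      refine ⟨by simp [huv], rfl, rfl, ?_⟩
      rw [show List.Chain' (fun a b => D a b ∨ D b a) [u, v] ↔ _ from List.isChain_pair]
      exact hadj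
    have hempty : {Z : Finset (Fin n) | u ∉ Z ∧ v ∉ Z ∧ DSep D u v Z} = ∅ := by
      ext Z
      simp only [Set.mem_setOf_eq, Set.mem_empty_iff_false, iff_false]
      rintro ⟨-, -, hds⟩
      obtain ⟨i, hi, hi1, -⟩ := hds [u, v] hpath
      simp only [List.length_cons, List.length_nil] at hi1
      omega
    rw [hempty, Set.ncard_empty]
    exact Nat.zero_le _
  · intro D3 hD3 hsub hn1 hn2
    have hkey3 : ∀ a b : Fin n, D3 a b → a.1 / m = b.1 / m := by
      intro a b h
      have hab : a ≠ b := by rintro rfl; exact hD3 a (Relation.TransGen.single h)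
      exact (hcl a b hab).mpr (Or.inl (hsub a b h))
    set S : Finset (Fin n) := Finset.univ.filter
      (fun x => x ≠ u ∧ x ≠ v ∧ (Relation.TransGen D3 x u ∨ Relation.TransGen D3 x v))
      with hSdef
    have hZS : ∀ x, x ∈ S ↔ x ≠ u ∧ x ≠ v ∧
        (Relation.TransGen D3 x u ∨ Relation.TransGen D3 x v) := by
      intro x
      simp [hSdef]
    have hSkey : ∀ x ∈ S, x.1 / m = u.1 / m := by
      intro x hx
      obtain ⟨-, -, h | h⟩ := (hZS x).mp hx
      · exact transGen_key (fun y : Fin n => y.1 / m) hkey3 h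
      · exact (transGen_key (fun y : Fin n => y.1 / m) hkey3 h).trans hsame.symm
    have huS : u ∉ S := fun h => ((hZS u).mp h).1 rfl
    have hvS : v ∉ S := fun h => ((hZS v).mp h).2.1 rfl
    have hdsepS : DSep D3 u v S := fun p hp => blocked_anc hD3 huv hn1 hn2 hZS hp
    have hUnion : ∀ W : Finset (Fin n), (∀ x ∈ W, x.1 / m ≠ u.1 / m) →
        DSep D3 u v (S ∪ W) := by
      intro W hW
      exact dsep_union huv (fun y : Fin n => y.1 / m) hkey3 hSkey hW hdsepS
    refine ⟨⟨S, hSkey, huS, hvS, hdsepS, hUnion⟩, ?_⟩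
    -- counting
    set K : Finset (Fin n) := Finset.univ.filter (fun x : Fin n => x.1 / m = u.1 / m)
      with hKdef
    have hK : K.card = m := card_clique hm0 hmn hq
    have hKc : Kᶜ.card = n - m := by
      rw [Finset.card_compl, hK, Fintype.card_fin]
    have hWsub : ∀ W ∈ Kᶜ.powerset, W = (S ∪ W) \ K := by
      intro W hW
      have hWK : W ⊆ Kᶜ := Finset.mem_powerset.mp hW
      ext x
      simp only [Finset.mem_sdiff, Finset.mem_union]
      constructor
      · intro hx
        have := Finset.mem_compl.mp (hWK hx)
        exact ⟨Or.inr hx, this⟩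
      · rintro ⟨hor, hxK⟩
        rcases hor with h | h
        · exact absurd (Finset.mem_filter.mpr ⟨Finset.mem_univ x, hSkey x h⟩) hxK
        · exact h
    have hinjOn : Set.InjOn (fun W => S ∪ W) ↑(Kᶜ.powerset) := by
      intro W1 h1 W2 h2 he
      rw [hWsub W1 (Finset.mem_coe.mp h1), hWsub W2 (Finset.mem_coe.mp h2)]
      simp only at he
      rw [he]
    set T : Finset (Finset (Fin n)) := Kᶜ.powerset.image (fun W => S ∪ W) with hTdef
    have hTcard : T.card = 2 ^ (n - m) := by
      rw [hTdef, Finset.card_image_of_injOn hinjOn, Finset.card_powerset, hKc]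
    have hsubset : ↑T ⊆ {Z : Finset (Fin n) | u ∉ Z ∧ v ∉ Z ∧ DSep D3 u v Z} := by
      intro Z hZmem
      obtain ⟨W, hWp, rfl⟩ := Finset.mem_image.mp hZmem
      have hWK : W ⊆ Kᶜ := Finset.mem_powerset.mp hWp
      have hWc : ∀ x ∈ W, x.1 / m ≠ u.1 / m := by
        intro x hx
        have := Finset.mem_compl.mp (hWK hx)
        intro hcon
        exact this (Finset.mem_filter.mpr ⟨Finset.mem_univ x, hcon⟩)
      refine ⟨?_, ?_, hUnion W hWc⟩
      · intro h
        rcases Finset.mem_union.mp h with h' | h'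
        · exact huS h'
        · exact hWc u h' rfl
      · intro h
        rcases Finset.mem_union.mp h with h' | h'
        · exact hvS h'
        · exact hWc v h' hsame.symm
    calc 2 ^ (n - m) = T.card := hTcard.symm
      _ = (↑T : Set (Finset (Fin n))).ncard := (Set.ncard_coe_finset T).symm
      _ ≤ _ := Set.ncard_le_ncard hsubset (Set.toFinite _)
end
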